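/- arXiv:0704.3952 — 5 statements merged into one kernel-verified Lean document; each statement's English description precedes it below -/
import Mathlib

section
/- Let p be a real polynomial of degree d > 1 whose Julia set J(p) is contained in ℝ. Then with a = min J(p) and b = max J(p), every preimage under p of a point of [a,b] that lies in ℂ actually lies in [a,b]; equivalently, p⁻¹([a,b]) ⊆ [a,b]. -/
open Polynomial Complex Metric Bornology Filter

/-- The filled Julia set of a polynomial: points with bounded forward orbit. -/
def filledJuliaSet (p : Polynomial ℂ) : Set ℂ :=
  {z | Bornology.IsBounded (Set.range fun n => (fun w => p.eval w)^[n] z)}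

/-- The Julia set of a polynomial, as the boundary of the filled Julia set. -/
def juliaSet (p : Polynomial ℂ) : Set ℂ := frontier (filledJuliaSet p)

/-! ### Algebraic auxiliary lemmas -/

lemma aux_prod_ne_zero (s : Multiset ℂ) (hs : ∀ α ∈ s, α.im = 0) (z : ℂ) (hz : z.im ≠ 0) :
    eval z ((s.map (fun α => X - C α)).prod) ≠ 0 := by
  rw [eval_multiset_prod, Multiset.map_map]
  refine Multiset.prod_ne_zero ?_
  intro h0
  rcases Multiset.mem_map.mp h0 with ⟨α, hαs, hα⟩
  simp only [Function.comp_apply, eval_sub, eval_X, eval_C] at hα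
  have : (z - α).im = z.im := by simp [Complex.sub_im, hs α hαs]
  rw [hα] at this
  simp at this
  exact hz this.symm

/-- Log-derivative sign lemma: for a product of `X - α` with real roots and `z` in the
upper half-plane, `Im (Q'(z) * conj (Q z)) ≤ 0`, strictly if there is at least one root. -/
lemma aux_im_deriv_conj (z : ℂ) (hz : 0 < z.im) :
    ∀ s : Multiset ℂ, (∀ α ∈ s, α.im = 0) →
      ((eval z (derivative ((s.map (fun α => X - C α)).prod))) *
        (starRingEnd ℂ) (eval z ((s.map (fun α => X - C α)).prod))).im ≤ 0 ∧
      (s ≠ 0 →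
      ((eval z (derivative ((s.map (fun α => X - C α)).prod))) *
        (starRingEnd ℂ) (eval z ((s.map (fun α => X - C α)).prod))).im < 0) := by
  intro s
  induction s using Multiset.induction_on with
  | empty => intro _; simp
  | cons α t ih =>
    intro hroots
    have hα : α.im = 0 := hroots α (Multiset.mem_cons_self α t)
    have ht : ∀ β ∈ t, β.im = 0 := fun β hβ => hroots β (Multiset.mem_cons_of_mem hβ)
    have iht := (ih ht).1
    set T : Polynomial ℂ := (t.map (fun α => X - C α)).prod with hT
    have hprod : ((α ::ₘ t).map (fun α => X - C α)).prod = (X - C α) * T := by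
      rw [Multiset.map_cons, Multiset.prod_cons]
    have hTz : eval z T ≠ 0 := aux_prod_ne_zero t ht z (ne_of_gt hz)
    set u := eval z T with hu
    set u' := eval z (derivative T) with hu'
    set v := z - α with hv
    have hder : eval z (derivative ((α ::ₘ t).map (fun α => X - C α)).prod) = u + v * u' := by
      rw [hprod, derivative_mul]
      simp [hv, hu, hu', mul_comm]
    have hev : eval z ((α ::ₘ t).map (fun α => X - C α)).prod = v * u := by
      rw [hprod]; simp [hv, hu]
    rw [hder, hev]
    have e : (u + v * u') * (starRingEnd ℂ) (v * u) =
        (u * (starRingEnd ℂ) u) * (starRingEnd ℂ) v +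
        (v * (starRingEnd ℂ) v) * (u' * (starRingEnd ℂ) u) := by
      rw [map_mul]; ring
    rw [e, Complex.mul_conj, Complex.mul_conj]
    have him : ((Complex.normSq u : ℂ) * (starRingEnd ℂ) v +
        (Complex.normSq v : ℂ) * (u' * (starRingEnd ℂ) u)).im
        = Complex.normSq u * (-v.im) + Complex.normSq v * (u' * (starRingEnd ℂ) u).im := by
      simp [Complex.add_im, Complex.mul_im, Complex.conj_im]
    rw [him]
    have hvim : v.im = z.im := by simp [hv, Complex.sub_im, hα]
    have hnu : 0 < Complex.normSq u := Complex.normSq_pos.mpr hTz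
    have hnv : 0 ≤ Complex.normSq v := Complex.normSq_nonneg v
    have : Complex.normSq u * (-v.im) + Complex.normSq v * (u' * (starRingEnd ℂ) u).im < 0 := by
      have h1 : Complex.normSq u * (-v.im) < 0 := by
        rw [hvim]; nlinarith
      have h2 : Complex.normSq v * (u' * (starRingEnd ℂ) u).im ≤ 0 :=
        mul_nonpos_of_nonneg_of_nonpos hnv iht
      linarith
    exact ⟨le_of_lt this, fun _ => this⟩

/-- Key lemma: a real-rooted polynomial with real leading coefficient taking the
real value `t` at a point `z` in the upper half-plane satisfies `Im f'(z) * t < 0`. -/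
lemma aux_key (f : Polynomial ℂ) (hf : 0 < f.natDegree)
    (hroots : ∀ w : ℂ, f.eval w = 0 → w.im = 0)
    (A : ℝ) (hlead : f.leadingCoeff = (A : ℂ))
    (z : ℂ) (hz : 0 < z.im) (t : ℝ) (hev : f.eval z = (t : ℂ)) :
    ((derivative f).eval z).im * t < 0 := by
  have hf0 : f ≠ 0 := fun h => by simp [h] at hf
  have hsplit : Splits f := IsAlgClosed.splits f
  have heq := hsplit.eq_prod_roots
  set Q : Polynomial ℂ := (f.roots.map (fun α => X - C α)).prod with hQ
  have hrootsreal : ∀ α ∈ f.roots, α.im = 0 := by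
    intro α hα
    exact hroots α ((mem_roots hf0).mp hα)
  have hcard : f.roots.card = f.natDegree := splits_iff_card_roots.mp hsplit
  have hroots_ne : f.roots ≠ 0 := by
    intro h
    rw [h] at hcard
    simp at hcard
    omega
  have hA0 : A ≠ 0 := by
    intro h
    rw [h] at hlead
    exact hf0 (leadingCoeff_eq_zero.mp (by simpa using hlead))
  have him := (aux_im_deriv_conj z hz f.roots hrootsreal).2 hroots_ne
  have hder : (derivative f).eval z = (A : ℂ) * eval z (derivative Q) := by
    rw [heq, hlead, derivative_C_mul, eval_C_mul]
  have hevQ : f.eval z = (A : ℂ) * eval z Q := by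
    rw [heq, hlead, eval_C_mul]
  have key : ((derivative f).eval z * (starRingEnd ℂ) (f.eval z)).im < 0 := by
    have e : (derivative f).eval z * (starRingEnd ℂ) (f.eval z)
        = ((A : ℂ) * (A : ℂ)) * (eval z (derivative Q) * (starRingEnd ℂ) (eval z Q)) := by
      rw [hder, hevQ, map_mul, Complex.conj_ofReal]; ring
    rw [e]
    have : ((A : ℂ) * (A : ℂ)) = ((A * A : ℝ) : ℂ) := by push_cast; ring
    rw [this]
    rw [Complex.im_ofReal_mul]
    nlinarith [mul_self_pos.mpr hA0]
  rw [hev, Complex.conj_ofReal] at key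
  have : ((derivative f).eval z * (t : ℂ)).im = ((derivative f).eval z).im * t := by
    simp [Complex.mul_im]
  linarith [this ▸ key]

lemma aux_prod_sign (ε : ℝ) : ∀ s : Multiset ℂ,
    (∀ α ∈ s, ∃ r : ℝ, α = (r : ℂ) ∧ 0 < ε * r) →
    ∃ r : ℝ, s.prod = (r : ℂ) ∧ 0 < ε ^ Multiset.card s * r := by
  intro s
  induction s using Multiset.induction_on with
  | empty => intro _; exact ⟨1, by simp⟩
  | cons α t ih =>
    intro h
    obtain ⟨r₀, hα, hr₀⟩ := h α (Multiset.mem_cons_self α t)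
    obtain ⟨r, hprod, hr⟩ := ih (fun β hβ => h β (Multiset.mem_cons_of_mem hβ))
    refine ⟨r₀ * r, ?_, ?_⟩
    · rw [Multiset.prod_cons, hα, hprod]; push_cast; ring
    · rw [Multiset.card_cons, pow_succ]
      nlinarith

/-- Evaluation of a polynomial with located real roots at a real point on one side. -/
lemma aux_sign (f : Polynomial ℂ) (A : ℝ) (hlead : f.leadingCoeff = (A : ℂ))
    (x ε : ℝ) (hroots : ∀ w : ℂ, f.eval w = 0 → ∃ r : ℝ, w = (r : ℂ) ∧ 0 < ε * (x - r))
    (t : ℝ) (hf0 : f ≠ 0) (hev : f.eval (x : ℂ) = (t : ℂ)) :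
    ∃ s : ℝ, 0 < ε ^ f.natDegree * s ∧ t = A * s := by
  have hsplit : Splits f := IsAlgClosed.splits f
  have heq := hsplit.eq_prod_roots
  have hcard : Multiset.card f.roots = f.natDegree := splits_iff_card_roots.mp hsplit
  have hevQ : f.eval (x : ℂ) =
      (A : ℂ) * ((f.roots.map (fun α => (x : ℂ) - α)).prod) := by
    conv_lhs => rw [heq]
    rw [hlead, eval_C_mul, eval_multiset_prod, Multiset.map_map]
    congr 2
    refine Multiset.map_congr rfl ?_
    intro α _
    simp
  have hside : ∀ α ∈ f.roots.map (fun α => (x : ℂ) - α),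
      ∃ r : ℝ, α = (r : ℂ) ∧ 0 < ε * r := by
    intro α hα
    rcases Multiset.mem_map.mp hα with ⟨β, hβ, rfl⟩
    obtain ⟨r, rfl, hr⟩ := hroots β ((mem_roots hf0).mp hβ)
    exact ⟨x - r, by push_cast; ring, hr⟩
  obtain ⟨s, hprod, hsgn⟩ := aux_prod_sign ε (f.roots.map (fun α => (x : ℂ) - α)) hside
  refine ⟨s, ?_, ?_⟩
  · rwa [Multiset.card_map, hcard] at hsgn
  · have : (t : ℂ) = (A : ℂ) * (s : ℂ) := by rw [← hev, hevQ, hprod]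
    exact_mod_cast this

/-! ### Dynamical auxiliary lemmas -/

lemma aux_inv (P : Polynomial ℂ) (z : ℂ) (h : P.eval z ∈ filledJuliaSet P) :
    z ∈ filledJuliaSet P := by
  simp only [filledJuliaSet, Set.mem_setOf_eq] at h ⊢
  have hsub : (Set.range fun n => (fun w => P.eval w)^[n] z) ⊆
      {z} ∪ Set.range fun n => (fun w => P.eval w)^[n] (P.eval z) := by
    rintro x ⟨n, rfl⟩
    cases n with
    | zero => left; simp
    | succ k =>
      right
      exact ⟨k, (Function.iterate_succ_apply (fun w => P.eval w) k z).symm⟩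
  exact IsBounded.subset (IsBounded.union (isBounded_singleton) h) hsub

lemma aux_growth (P : Polynomial ℂ) (hd : 1 < P.natDegree) :
    ∃ R : ℝ, 1 ≤ R ∧ ∀ w : ℂ, R < ‖w‖ → 2 * ‖w‖ ≤ ‖P.eval w‖ := by
  set d := P.natDegree with hdd
  have hP0 : P ≠ 0 := fun h => by rw [hdd, h] at hd; simp at hd
  set A := ‖P.leadingCoeff‖ with hA
  have hApos : 0 < A := norm_pos_iff.mpr (leadingCoeff_ne_zero.mpr hP0)
  set S := ∑ i ∈ Finset.range d, ‖P.coeff i‖ with hS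
  have hSnn : 0 ≤ S := Finset.sum_nonneg fun i _ => norm_nonneg _
  refine ⟨max 1 ((S + 2) / A), le_max_left _ _, ?_⟩
  intro w hw
  have hw1 : 1 < ‖w‖ := lt_of_le_of_lt (le_max_left _ _) hw
  have hw2 : (S + 2) / A < ‖w‖ := lt_of_le_of_lt (le_max_right _ _) hw
  have hw3 : S + 2 ≤ A * ‖w‖ := by
    rw [div_lt_iff₀ hApos] at hw2; nlinarith
  have heval : P.eval w = (∑ i ∈ Finset.range d, P.coeff i * w ^ i) + P.coeff d * w ^ d := by
    rw [eval_eq_sum_range, Finset.sum_range_succ]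
  set E := ∑ i ∈ Finset.range d, P.coeff i * w ^ i with hE
  set L := P.coeff d * w ^ d with hL
  have hEbound : ‖E‖ ≤ S * ‖w‖ ^ (d - 1) := by
    calc ‖E‖ ≤ ∑ i ∈ Finset.range d, ‖P.coeff i * w ^ i‖ := norm_sum_le _ _
      _ ≤ ∑ i ∈ Finset.range d, ‖P.coeff i‖ * ‖w‖ ^ (d - 1) := by
          refine Finset.sum_le_sum fun i hi => ?_
          rw [norm_mul, norm_pow]
          refine mul_le_mul_of_nonneg_left ?_ (norm_nonneg _)
          exact pow_le_pow_right₀ (le_of_lt hw1) (by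
            have := Finset.mem_range.mp hi; omega)
      _ = S * ‖w‖ ^ (d - 1) := by rw [← Finset.sum_mul]
  have hLnorm : ‖L‖ = A * (‖w‖ ^ (d - 1) * ‖w‖) := by
    rw [hL, norm_mul, norm_pow, ← pow_succ]
    have : d - 1 + 1 = d := by omega
    rw [this, hA, coeff_natDegree]
  have htri : ‖L‖ ≤ ‖P.eval w‖ + ‖E‖ := by
    have heq2 : L = P.eval w + (-E) := by rw [heval]; ring
    calc ‖L‖ = ‖P.eval w + (-E)‖ := by rw [← heq2]
      _ ≤ ‖P.eval w‖ + ‖-E‖ := norm_add_le _ _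
      _ = ‖P.eval w‖ + ‖E‖ := by rw [norm_neg]
  have hwp : ‖w‖ ≤ ‖w‖ ^ (d - 1) := by
    calc ‖w‖ = ‖w‖ ^ 1 := (pow_one _).symm
      _ ≤ ‖w‖ ^ (d - 1) := pow_le_pow_right₀ (le_of_lt hw1) (by omega)
  have hwpos : (0:ℝ) < ‖w‖ := by linarith
  have hwp1 : (0:ℝ) < ‖w‖ ^ (d-1) := by positivity
  nlinarith [hwp1, hwpos]

lemma aux_escape (P : Polynomial ℂ) (R : ℝ) (hR1 : 1 ≤ R)
    (hR : ∀ w : ℂ, R < ‖w‖ → 2 * ‖w‖ ≤ ‖P.eval w‖) (w : ℂ) (hw : R < ‖w‖) :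
    ∀ k : ℕ, R < ‖(fun w => P.eval w)^[k] w‖ ∧
      (2:ℝ) ^ k * ‖w‖ ≤ ‖(fun w => P.eval w)^[k] w‖ := by
  intro k
  induction k with
  | zero => simpa using hw
  | succ k ih =>
    obtain ⟨h1, h2⟩ := ih
    rw [Function.iterate_succ_apply']
    have h3 := hR _ h1
    constructor
    · nlinarith
    · rw [pow_succ]
      nlinarith [norm_nonneg w]

lemma aux_K_eq (P : Polynomial ℂ) (R : ℝ) (hR1 : 1 ≤ R)
    (hR : ∀ w : ℂ, R < ‖w‖ → 2 * ‖w‖ ≤ ‖P.eval w‖) :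
    filledJuliaSet P =
      ⋂ n : ℕ, (fun z => (fun w => P.eval w)^[n] z) ⁻¹' Metric.closedBall 0 R := by
  ext z
  simp only [filledJuliaSet, Set.mem_setOf_eq, Set.mem_iInter, Set.mem_preimage,
    Metric.mem_closedBall, dist_zero_right]
  constructor
  · intro hz n
    by_contra hn
    push_neg at hn
    obtain ⟨C, hC⟩ := isBounded_iff_forall_norm_le.mp hz
    obtain ⟨k, hk⟩ := pow_unbounded_of_one_lt C (one_lt_two (α := ℝ))
    have := (aux_escape P R hR1 hR _ hn k).2
    rw [← Function.iterate_add_apply] at this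
    have hCk := hC _ ⟨k + n, rfl⟩
    have h1 : (1:ℝ) ≤ ‖(fun w => P.eval w)^[n] z‖ := le_of_lt (lt_of_le_of_lt hR1 hn)
    nlinarith [pow_pos (zero_lt_two (α := ℝ)) k]
  · intro hz
    refine isBounded_iff_forall_norm_le.mpr ⟨R, ?_⟩
    rintro x ⟨n, rfl⟩
    exact hz n

lemma aux_K_compact (P : Polynomial ℂ) (R : ℝ) (hR1 : 1 ≤ R)
    (hR : ∀ w : ℂ, R < ‖w‖ → 2 * ‖w‖ ≤ ‖P.eval w‖) :
    IsCompact (filledJuliaSet P) ∧ IsClosed (filledJuliaSet P) := by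
  have heq := aux_K_eq P R hR1 hR
  have hclosed : IsClosed (filledJuliaSet P) := by
    rw [heq]
    refine isClosed_iInter fun n => IsClosed.preimage ?_ Metric.isClosed_closedBall
    exact (Polynomial.continuous P).iterate n
  refine ⟨?_, hclosed⟩
  refine isCompact_of_isClosed_isBounded hclosed ?_
  have hsub : filledJuliaSet P ⊆ Metric.closedBall 0 R := by
    rw [heq]
    intro z hz
    simpa using Set.mem_iInter.mp hz 0
  exact (Metric.isBounded_closedBall).subset hsub

/-! ### Geometric auxiliary lemmas -/

lemma aux_line_cont (z : ℂ) : Continuous fun t : ℝ => z + (t : ℂ) * I := by continuity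

lemma aux_K_real (K : Set ℂ) (hK : IsCompact K) (hcl : IsClosed K)
    (hfr : ∀ z ∈ frontier K, z.im = 0) : ∀ z ∈ K, z.im = 0 := by
  intro z hz
  set S : Set ℝ := {t : ℝ | z + (t : ℂ) * I ∈ K} with hSdef
  have hS0 : (0 : ℝ) ∈ S := by simp [hSdef, hz]
  have hSne : S.Nonempty := ⟨0, hS0⟩
  have hScl : IsClosed S := IsClosed.preimage (aux_line_cont z) hcl
  obtain ⟨C, hC⟩ := isBounded_iff_forall_norm_le.mp hK.isBounded
  have hbdd : ∀ t ∈ S, |t| ≤ C + |z.im| := by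
    intro t ht
    have h1 : |(z + (t:ℂ)*I).im| ≤ ‖z + (t:ℂ)*I‖ := Complex.abs_im_le_norm _
    have h2 : (z + (t:ℂ)*I).im = z.im + t := by simp
    have h3 := hC _ ht
    rw [h2] at h1
    have h4 : |t| ≤ |z.im + t| + |z.im| := by
      calc |t| = |(z.im + t) + -(z.im)| := by rw [show (z.im + t) + -(z.im) = t by ring]
        _ ≤ |z.im + t| + |(-(z.im))| := abs_add_le _ _
        _ = |z.im + t| + |z.im| := by rw [abs_neg]
    linarith
  have hba : BddAbove S := ⟨C + |z.im|, fun t ht => le_of_abs_le (hbdd t ht)⟩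
  have hbb : BddBelow S := ⟨-(C + |z.im|), fun t ht => neg_le_of_abs_le (hbdd t ht)⟩
  have hfront : ∀ (s : ℝ) (σ : ℝ), s ∈ S →
      (∀ n : ℕ, s + σ * (1/(n+1)) ∉ S) → z.im + s = 0 := by
    intro s σ hs hout
    have hwK : z + (s:ℂ)*I ∈ K := hs
    have htend : Tendsto (fun n : ℕ => s + σ * (1/(n+1))) atTop (nhds s) := by
      have h0 : Tendsto (fun n : ℕ => 1/((n:ℝ)+1)) atTop (nhds 0) :=
        tendsto_one_div_add_atTop_nhds_zero_nat
      have := (tendsto_const_nhds (x := s) (f := atTop)).add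
        ((tendsto_const_nhds (x := σ) (f := atTop)).mul h0)
      simpa using this
    have htend2 : Tendsto (fun n : ℕ => z + ((s + σ * (1/(n+1)) : ℝ) : ℂ) * I) atTop
        (nhds (z + (s:ℂ)*I)) := ((aux_line_cont z).tendsto s).comp htend
    have hmem : ∀ n : ℕ, z + ((s + σ * (1/(n+1)) : ℝ) : ℂ) * I ∈ Kᶜ := fun n => hout n
    have hcl2 : z + (s:ℂ)*I ∈ closure Kᶜ :=
      mem_closure_of_tendsto htend2 (Filter.Eventually.of_forall hmem)
    have hfr2 : z + (s:ℂ)*I ∈ frontier K := by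
      rw [frontier_eq_closure_inter_closure]
      exact ⟨subset_closure hwK, hcl2⟩
    have := hfr _ hfr2
    simpa using this
  have htop : z.im + sSup S = 0 := by
    refine hfront (sSup S) 1 (hScl.csSup_mem hSne hba) fun n hn => ?_
    have h1 : sSup S + 1 * (1/(n+1)) ≤ sSup S := le_csSup hba hn
    have : (0:ℝ) < 1/((n:ℝ)+1) := by positivity
    linarith
  have hbot : z.im + sInf S = 0 := by
    refine hfront (sInf S) (-1) (hScl.csInf_mem hSne hbb) fun n hn => ?_
    have h1 : sInf S ≤ sInf S + (-1) * (1/(n+1)) := csInf_le hbb hn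
    have : (0:ℝ) < 1/((n:ℝ)+1) := by positivity
    linarith
  have h0top : (0:ℝ) ≤ sSup S := le_csSup hba hS0
  have h0bot : sInf S ≤ 0 := csInf_le hbb hS0
  linarith

lemma aux_frontier_eq (K : Set ℂ) (hK : IsCompact K) (hcl : IsClosed K)
    (hfr : ∀ z ∈ frontier K, z.im = 0) : frontier K = K := by
  have hreal := aux_K_real K hK hcl hfr
  have hint : interior K = ∅ := by
    by_contra h
    obtain ⟨z, hz⟩ := Set.nonempty_iff_ne_empty.mpr h
    obtain ⟨ε, hε, hball⟩ := Metric.isOpen_iff.mp isOpen_interior z hz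
    have h1 : z + ((ε/2 : ℝ):ℂ) * I ∈ K := by
      refine interior_subset (hball ?_)
      simp only [Metric.mem_ball, dist_eq_norm, add_sub_cancel_left]
      rw [norm_mul, Complex.norm_real, Complex.norm_I, mul_one, Real.norm_eq_abs,
        abs_of_pos (half_pos hε)]
      linarith
    have h2 := hreal _ h1
    have h3 := hreal _ (interior_subset hz)
    simp [h3] at h2
    linarith
  rw [hcl.frontier_eq, hint, Set.diff_empty]

/-! ### Conjugation -/

lemma aux_conj (p : Polynomial ℝ) (z : ℂ) :
    (p.map (algebraMap ℝ ℂ)).eval ((starRingEnd ℂ) z)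
      = (starRingEnd ℂ) ((p.map (algebraMap ℝ ℂ)).eval z) := by
  rw [eval_map, eval_map, hom_eval₂]
  congr 1
  refine RingHom.ext fun r => ?_
  simp [Complex.conj_ofReal]

/-! ### The two half-plane / real-axis contradictions -/

lemma aux_nonreal (P : Polynomial ℂ) (hdeg : 0 < P.natDegree) (A : ℝ)
    (hlead : P.leadingCoeff = (A : ℂ)) (a b c : ℝ) (hac : a < c) (hcb : c < b)
    (hra : ∀ w : ℂ, P.eval w = (a : ℂ) → w.im = 0)
    (hrb : ∀ w : ℂ, P.eval w = (b : ℂ) → w.im = 0)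
    (z : ℂ) (hz : 0 < z.im) (hev : P.eval z = (c : ℂ)) : False := by
  have hPC : ∀ v : ℝ, (P - C (v:ℂ)).natDegree = P.natDegree := fun v => natDegree_sub_C
  have hlC : ∀ v : ℝ, (P - C (v:ℂ)).leadingCoeff = (A : ℂ) := by
    intro v
    rw [leadingCoeff, hPC v, coeff_sub, coeff_C, if_neg (by omega), sub_zero, ← hlead,
      leadingCoeff]
  have hderC : ∀ v : ℝ, derivative (P - C (v:ℂ)) = derivative P := by
    intro v; rw [derivative_sub, derivative_C, sub_zero]
  have key1 : ((derivative P).eval z).im * (c - a) < 0 := by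
    have := aux_key (P - C (a:ℂ)) (by rw [hPC]; exact hdeg)
      (fun w hw => hra w (by rw [eval_sub, eval_C, sub_eq_zero] at hw; exact hw))
      A (hlC a) z hz (c - a) (by rw [eval_sub, eval_C, hev]; push_cast; ring)
    rwa [hderC] at this
  have key2 : ((derivative P).eval z).im * (c - b) < 0 := by
    have := aux_key (P - C (b:ℂ)) (by rw [hPC]; exact hdeg)
      (fun w hw => hrb w (by rw [eval_sub, eval_C, sub_eq_zero] at hw; exact hw))
      A (hlC b) z hz (c - b) (by rw [eval_sub, eval_C, hev]; push_cast; ring)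
    rwa [hderC] at this
  set m := ((derivative P).eval z).im
  have hm1 : m < 0 := by nlinarith
  have hm2 : 0 < m := by nlinarith
  linarith

lemma aux_realcase (P : Polynomial ℂ) (hdeg : 0 < P.natDegree) (A : ℝ)
    (hlead : P.leadingCoeff = (A : ℂ)) (a b c : ℝ) (hac : a < c) (hcb : c < b)
    (hra : ∀ w : ℂ, P.eval w = (a : ℂ) → ∃ r : ℝ, w = (r : ℂ) ∧ a ≤ r ∧ r ≤ b)
    (hrb : ∀ w : ℂ, P.eval w = (b : ℂ) → ∃ r : ℝ, w = (r : ℂ) ∧ a ≤ r ∧ r ≤ b)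
    (x : ℝ) (hev : P.eval (x : ℂ) = (c : ℂ)) : a ≤ x ∧ x ≤ b := by
  have hP0 : P ≠ 0 := fun h => by rw [h] at hdeg; simp at hdeg
  have hPC : ∀ v : ℝ, (P - C (v:ℂ)).natDegree = P.natDegree := fun v => natDegree_sub_C
  have hfC : ∀ v : ℝ, (P - C (v:ℂ)) ≠ 0 := by
    intro v h
    have := hPC v
    rw [h] at this
    simp at this
    omega
  have hlC : ∀ v : ℝ, (P - C (v:ℂ)).leadingCoeff = (A : ℂ) := by
    intro v
    rw [leadingCoeff, hPC v, coeff_sub, coeff_C, if_neg (by omega), sub_zero, ← hlead,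
      leadingCoeff]
  by_contra hcon
  push_neg at hcon
  have hside : b < x ∨ x < a := by
    by_cases h : a ≤ x
    · exact Or.inl (lt_of_not_ge fun hxb => absurd (hcon h) (not_lt.mpr hxb))
    · exact Or.inr (lt_of_not_ge h)
  have main : ∀ ε : ℝ, ε = 1 ∨ ε = -1 → (∀ r : ℝ, a ≤ r → r ≤ b → 0 < ε * (x - r)) → False := by
    intro ε hε hsep
    obtain ⟨sf, hsf, hsf2⟩ := aux_sign (P - C (a:ℂ)) A (hlC a) x ε
      (fun w hw => by
        rw [eval_sub, eval_C, sub_eq_zero] at hw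
        obtain ⟨r, rfl, hr1, hr2⟩ := hra w hw
        exact ⟨r, rfl, hsep r hr1 hr2⟩)
      (c - a) (hfC a) (by rw [eval_sub, eval_C, hev]; push_cast; ring)
    obtain ⟨sg, hsg, hsg2⟩ := aux_sign (P - C (b:ℂ)) A (hlC b) x ε
      (fun w hw => by
        rw [eval_sub, eval_C, sub_eq_zero] at hw
        obtain ⟨r, rfl, hr1, hr2⟩ := hrb w hw
        exact ⟨r, rfl, hsep r hr1 hr2⟩)
      (c - b) (hfC b) (by rw [eval_sub, eval_C, hev]; push_cast; ring)
    rw [hPC] at hsf hsg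
    have hε2 : ε ^ P.natDegree * (ε ^ P.natDegree) = 1 := by
      rcases hε with rfl | rfl
      · simp
      · rw [← pow_add]
        have : (-1 : ℝ) ^ (P.natDegree + P.natDegree) = ((-1)^2 : ℝ) ^ P.natDegree := by
          rw [← pow_mul]; ring_nf
        rw [this]; norm_num
    have hpos : 0 < sf * sg := by
      have := mul_pos hsf hsg
      have heq : ε ^ P.natDegree * sf * (ε ^ P.natDegree * sg)
          = (ε ^ P.natDegree * ε ^ P.natDegree) * (sf * sg) := by ring
      rw [heq, hε2, one_mul] at this
      exact this
    have hca : 0 < c - a := by linarith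
    have hcb2 : c - b < 0 := by linarith
    rw [hsf2] at hca
    rw [hsg2] at hcb2
    nlinarith
  rcases hside with hxb | hxa
  · exact main 1 (Or.inl rfl) (fun r _ hr2 => by nlinarith)
  · exact main (-1) (Or.inr rfl) (fun r hr1 _ => by nlinarith)

/-- If the Julia set of a real polynomial of degree `> 1` is real, then with
`a = min J(p)`, `b = max J(p)`, every complex preimage under `p` of a point of
`[a,b]` lies in `[a,b]`. -/
theorem stmt_7 (p : Polynomial ℝ) (hd : 1 < p.natDegree)
    (hJ : ∀ z ∈ juliaSet (p.map (algebraMap ℝ ℂ)), z.im = 0)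
    (a b : ℝ)
    (ha : IsLeast {x : ℝ | (x : ℂ) ∈ juliaSet (p.map (algebraMap ℝ ℂ))} a)
    (hb : IsGreatest {x : ℝ | (x : ℂ) ∈ juliaSet (p.map (algebraMap ℝ ℂ))} b) :
    ∀ z : ℂ, (p.map (algebraMap ℝ ℂ)).eval z ∈ (fun x : ℝ => (x : ℂ)) '' Set.Icc a b →
      z ∈ (fun x : ℝ => (x : ℂ)) '' Set.Icc a b := by
  set P : Polynomial ℂ := p.map (algebraMap ℝ ℂ) with hP
  have hinj : Function.Injective (algebraMap ℝ ℂ) := (algebraMap ℝ ℂ).injective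
  have hdP : 1 < P.natDegree := by
    rw [hP, natDegree_map_eq_of_injective hinj]; exact hd
  have hdeg : 0 < P.natDegree := by omega
  have hlead : P.leadingCoeff = ((p.leadingCoeff : ℝ) : ℂ) := by
    rw [hP, leadingCoeff_map_of_injective hinj]; rfl
  obtain ⟨R, hR1, hR⟩ := aux_growth P hdP
  obtain ⟨hcomp, hclosed⟩ := aux_K_compact P R hR1 hR
  have hfr : ∀ z ∈ frontier (filledJuliaSet P), z.im = 0 := hJ
  have hJK : juliaSet P = filledJuliaSet P := aux_frontier_eq _ hcomp hclosed hfr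
  -- all preimages of Julia points are in [a,b]
  have hrootmem : ∀ r : ℝ, (r : ℂ) ∈ juliaSet P →
      ∀ w : ℂ, P.eval w = (r : ℂ) → w.im = 0 ∧ a ≤ w.re ∧ w.re ≤ b := by
    intro r hr w hw
    have h1 : P.eval w ∈ filledJuliaSet P := by rw [hw, ← hJK]; exact hr
    have h2 : w ∈ filledJuliaSet P := aux_inv P w h1
    have h3 : w ∈ juliaSet P := by rw [hJK]; exact h2
    have h4 : w.im = 0 := hJ w h3
    have h5 : ((w.re : ℝ) : ℂ) = w := by
      apply Complex.ext <;> simp [h4.symm]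
    have h6 : w.re ∈ {x : ℝ | (x : ℂ) ∈ juliaSet P} := by
      simp only [Set.mem_setOf_eq, h5]; exact h3
    exact ⟨h4, ha.2 h6, hb.2 h6⟩
  have hra := hrootmem a ha.1
  have hrb := hrootmem b hb.1
  intro z hz
  obtain ⟨c, hc, hcz⟩ := hz
  -- conclusion builder
  have finish : z.im = 0 → a ≤ z.re → z.re ≤ b → z ∈ (fun x : ℝ => (x : ℂ)) '' Set.Icc a b := by
    intro h1 h2 h3
    exact ⟨z.re, ⟨h2, h3⟩, by apply Complex.ext <;> simp [h1.symm]⟩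
  rcases eq_or_lt_of_le hc.1 with hca | hca
  · -- c = a
    obtain ⟨h1, h2, h3⟩ := hra z (by rw [← hcz, ← hca])
    exact finish h1 h2 h3
  rcases eq_or_lt_of_le hc.2 with hcb | hcb
  · -- c = b
    obtain ⟨h1, h2, h3⟩ := hrb z (by rw [← hcz, hcb])
    exact finish h1 h2 h3
  -- a < c < b
  have hra' : ∀ w : ℂ, P.eval w = (a : ℂ) → w.im = 0 := fun w hw => (hra w hw).1
  have hrb' : ∀ w : ℂ, P.eval w = (b : ℂ) → w.im = 0 := fun w hw => (hrb w hw).1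
  have hev : P.eval z = (c : ℂ) := hcz.symm
  have him : z.im = 0 := by
    rcases lt_trichotomy z.im 0 with hneg | h0 | hpos
    · exfalso
      refine aux_nonreal P hdeg p.leadingCoeff hlead a b c hca hcb hra' hrb'
        ((starRingEnd ℂ) z) (by simp [Complex.conj_im]; linarith) ?_
      rw [hP, aux_conj p z, ← hP, hev, Complex.conj_ofReal]
    · exact h0
    · exact absurd (aux_nonreal P hdeg p.leadingCoeff hlead a b c hca hcb hra' hrb'
        z hpos hev) id
  have hzx : ((z.re : ℝ) : ℂ) = z := by apply Complex.ext <;> simp [him.symm]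
  have hreal := aux_realcase P hdeg p.leadingCoeff hlead a b c hca hcb
    (fun w hw => ⟨w.re, by
      obtain ⟨h1, h2, h3⟩ := hra w hw
      exact ⟨(by apply Complex.ext <;> simp [h1.symm]), h2, h3⟩⟩)
    (fun w hw => ⟨w.re, by
      obtain ⟨h1, h2, h3⟩ := hrb w hw
      exact ⟨(by apply Complex.ext <;> simp [h1.symm]), h2, h3⟩⟩)
    z.re (by rw [hzx]; exact hev)
  exact finish him hreal.1 hreal.2
end

section
/- Let p be a real polynomial of degree d > 1. If there exists a nondegenerate interval [a,b] ⊆ ℝ such that every complex preimage under p of a point of [a,b] lies in [a,b], then the Julia set of p is contained in ℝ. -/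
open Complex Set Metric Filter Function Topology Polynomial Bornology

namespace Stmt8

noncomputable section

/-- The complex segment `[a,b]` on the real axis. -/
def SS (a b : ℝ) : Set ℂ := (fun x : ℝ => (x : ℂ)) '' Set.Icc a b

/-- The exterior of the closed unit disk. -/
def EE : Set ℂ := {w : ℂ | 1 < ‖w‖}

/-- The Joukowski-type conformal map from `EE` onto the complement of the segment. -/
def psi (a b : ℝ) (w : ℂ) : ℂ :=
  (((a+b)/2 : ℝ) : ℂ) + (((b-a)/2 : ℝ) : ℂ) * (w + w⁻¹) / 2

/-- The inverse of `psi`. -/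
def phi (a b : ℝ) (z : ℂ) : ℂ := Function.invFunOn (psi a b) (EE) z

lemma mem_SS_iff {a b : ℝ} {z : ℂ} : z ∈ SS a b ↔ z.im = 0 ∧ z.re ∈ Set.Icc a b := by
  constructor
  · rintro ⟨x, hx, rfl⟩; simpa using hx
  · rintro ⟨h1, h2⟩
    exact ⟨z.re, h2, by simp [Complex.ext_iff, h1]⟩

lemma isOpen_EE : IsOpen (EE) := isOpen_lt continuous_const continuous_norm

lemma ne_zero_of_mem_EE {w : ℂ} (hw : w ∈ EE) : w ≠ 0 := by
  intro h; simp [EE, h] at hw; linarith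

variable {a b : ℝ}

lemma r_ne (hab : a < b) : (((b-a)/2 : ℝ) : ℂ) ≠ 0 := by
  rw [Complex.ofReal_ne_zero]; intro h; simp at h; linarith

lemma psi_injOn (hab : a < b) : Set.InjOn (psi a b) (EE) := by
  intro w hw w' hw' h
  have hr := r_ne hab
  have hw0 : w ≠ 0 := ne_zero_of_mem_EE hw
  have hw'0 : w' ≠ 0 := ne_zero_of_mem_EE hw'
  unfold psi at h
  have h2 : (((b-a)/2 : ℝ) : ℂ) * (w + w⁻¹) = (((b-a)/2 : ℝ) : ℂ) * (w' + w'⁻¹) := by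
    linear_combination 2 * h
  have h1 : w + w⁻¹ = w' + w'⁻¹ := mul_left_cancel₀ hr h2
  have key : (w - w') * (w * w' - 1) = 0 := by
    field_simp at h1
    linear_combination h1
  rcases mul_eq_zero.1 key with h3 | h3
  · exact sub_eq_zero.1 h3
  · exfalso
    have hww' : w * w' = 1 := by linear_combination h3
    have h1' : 1 < ‖w‖ := hw
    have h2' : 1 < ‖w'‖ := hw'
    have : (1:ℝ) < ‖w‖ * ‖w'‖ := by nlinarith
    rw [← norm_mul, hww', norm_one] at this; linarith

lemma psi_conj (w : ℂ) : psi a b ((starRingEnd ℂ) w) = (starRingEnd ℂ) (psi a b w) := by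
  simp [psi, map_add, map_mul, map_div₀, map_inv₀, Complex.conj_ofReal, map_ofNat]

lemma psi_not_mem_SS (hab : a < b) {w : ℂ} (hw : w ∈ EE) : psi a b w ∉ SS a b := by
  intro hmem
  obtain ⟨him, hre⟩ := mem_SS_iff.1 hmem
  have hw1 : 1 < ‖w‖ := hw
  have hconjE : (starRingEnd ℂ) w ∈ EE := by
    simpa [EE] using hw1
  have heq : psi a b ((starRingEnd ℂ) w) = psi a b w := by
    rw [psi_conj, Complex.conj_eq_iff_im.2 him]
  have hwr := psi_injOn hab hconjE hw heq
  have him0 : w.im = 0 := by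
    have := congrArg Complex.im hwr
    simp at this; linarith
  set x := w.re with hx
  have hwx : w = (x : ℂ) := by
    apply Complex.ext <;> simp [him0, hx]
  have hx1 : 1 < |x| := by rwa [hwx, Complex.norm_real] at hw1
  have hval : psi a b w = (((a+b)/2 + (b-a)/2 * (x + x⁻¹)/2 : ℝ) : ℂ) := by
    rw [hwx]; unfold psi; push_cast; ring
  rw [hval] at hre
  simp only [Complex.ofReal_re] at hre
  have hx0 : x ≠ 0 := by intro h; rw [h] at hx1; norm_num at hx1
  have hxi : x * x⁻¹ = 1 := mul_inv_cancel₀ hx0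
  rcases lt_abs.1 hx1 with h | h
  · have h2 : 2 < x + x⁻¹ := by nlinarith
    have : b < (a+b)/2 + (b-a)/2 * (x + x⁻¹)/2 := by nlinarith
    linarith [hre.2]
  · have h2 : x + x⁻¹ < -2 := by nlinarith
    have : (a+b)/2 + (b-a)/2 * (x + x⁻¹)/2 < a := by nlinarith
    linarith [hre.1]

lemma exists_psi_eq (hab : a < b) {z : ℂ} (hz : z ∉ SS a b) : ∃ w ∈ EE, psi a b w = z := by
  have hR := r_ne hab
  set R : ℂ := (((b-a)/2 : ℝ) : ℂ) with hRdef
  set C : ℂ := (((a+b)/2 : ℝ) : ℂ) with hCdef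
  set t : ℂ := 2 * (z - C) / R with htdef
  obtain ⟨s, hs⟩ := IsAlgClosed.exists_pow_nat_eq (t^2 - 4) (n := 2) two_pos
  set w₁ : ℂ := (t + s)/2 with hw1def
  set w₂ : ℂ := (t - s)/2 with hw2def
  have hmul : w₁ * w₂ = 1 := by
    rw [hw1def, hw2def]; linear_combination (-1/4 : ℂ) * hs
  have hsum : w₁ + w₂ = t := by rw [hw1def, hw2def]; ring
  have h10 : w₁ ≠ 0 := by intro h; rw [h, zero_mul] at hmul; exact zero_ne_one hmul
  have h20 : w₂ ≠ 0 := by intro h; rw [h, mul_zero] at hmul; exact zero_ne_one hmul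
  have hinv1 : w₁⁻¹ = w₂ := inv_eq_of_mul_eq_one_right hmul
  have hinv2 : w₂⁻¹ = w₁ := inv_eq_of_mul_eq_one_right (by rw [mul_comm]; exact hmul)
  have hzt : z = C + R * t / 2 := by
    rw [htdef]; field_simp; ring
  have hpsi1 : psi a b w₁ = z := by
    unfold psi; rw [hinv1, hsum, ← hCdef, ← hRdef, ← hzt]
  have hpsi2 : psi a b w₂ = z := by
    unfold psi; rw [hinv2, ← hCdef, ← hRdef]
    rw [show w₂ + w₁ = t by rw [← hsum]; ring, ← hzt]
  by_cases hb1 : 1 < ‖w₁‖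
  · exact ⟨w₁, hb1, hpsi1⟩
  by_cases hb2 : 1 < ‖w₂‖
  · exact ⟨w₂, hb2, hpsi2⟩
  exfalso; apply hz
  push_neg at hb1 hb2
  have hn : ‖w₁‖ * ‖w₂‖ = 1 := by rw [← norm_mul, hmul, norm_one]
  have h1e : ‖w₁‖ = 1 := by nlinarith [norm_nonneg w₁, norm_nonneg w₂]
  have hnsq : Complex.normSq w₁ = 1 := by
    have : Complex.normSq w₁ = ‖w₁‖^2 := by
      rw [Complex.normSq_eq_norm_sq]
    rw [this, h1e]; norm_num
  have hw2c : w₂ = (starRingEnd ℂ) w₁ := by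
    rw [← hinv1, Complex.inv_def, hnsq]; simp
  have ht : t = 2 * (w₁.re : ℂ) := by
    rw [← hsum, hw2c, Complex.add_conj]; push_cast; ring
  have hzre : z = C + R * (w₁.re : ℂ) := by
    rw [hzt, ht]; ring
  have habs : |w₁.re| ≤ 1 := by
    rw [← h1e]; exact Complex.abs_re_le_norm w₁
  rw [mem_SS_iff, hzre, hCdef, hRdef]
  constructor
  · simp [← Complex.ofReal_mul]
  · rw [abs_le] at habs
    constructor
    · simp [← Complex.ofReal_mul, ← Complex.ofReal_add]; nlinarith
    · simp [← Complex.ofReal_mul, ← Complex.ofReal_add]; nlinarith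

lemma hasStrictDerivAt_psi {w : ℂ} (hw0 : w ≠ 0) :
    HasStrictDerivAt (psi a b) ((((b-a)/2:ℝ):ℂ) * (1 + -(w^2)⁻¹) / 2) w := by
  have h1 : HasStrictDerivAt (fun w : ℂ => w + w⁻¹) (1 + -(w^2)⁻¹) w :=
    (hasStrictDerivAt_id w).add (hasStrictDerivAt_inv hw0)
  exact ((h1.const_mul ((((b-a)/2:ℝ):ℂ))).div_const 2).const_add _

lemma psi_deriv_ne (hab : a < b) {w : ℂ} (hw : w ∈ EE) :
    (((b-a)/2:ℝ):ℂ) * (1 + -(w^2)⁻¹) / 2 ≠ 0 := by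
  have hw1 : 1 < ‖w‖ := hw
  apply div_ne_zero (mul_ne_zero (r_ne hab) ?_) two_ne_zero
  intro h
  have h2 : (w^2)⁻¹ = 1 := by linear_combination -h
  have h3 : w^2 = 1 := by rwa [inv_eq_one] at h2
  have : ‖w^2‖ = 1 := by rw [h3, norm_one]
  rw [norm_pow] at this
  nlinarith

lemma phi_spec (hab : a < b) {z : ℂ} (hz : ∃ w ∈ EE, psi a b w = z) :
    phi a b z ∈ EE ∧ psi a b (phi a b z) = z :=
  ⟨Function.invFunOn_mem hz, Function.invFunOn_eq hz⟩

lemma phi_differentiableAt (hab : a < b) {z : ℂ} (hz : ∃ w ∈ EE, psi a b w = z) :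
    DifferentiableAt ℂ (phi a b) z := by
  obtain ⟨hE, hpsiz⟩ := phi_spec hab hz
  set w₀ := phi a b z with hw₀
  have hst := hasStrictDerivAt_psi (a := a) (b := b) (ne_zero_of_mem_EE hE)
  have hne := psi_deriv_ne hab hE
  set l := hst.localInverse (psi a b) _ w₀ hne with hl
  have hli : HasStrictDerivAt l _ (psi a b w₀) := hst.to_localInverse hne
  have hcont : ContinuousAt l (psi a b w₀) :=
    (hst.hasStrictFDerivAt_equiv hne).localInverse_continuousAt
  have hlz : l (psi a b w₀) = w₀ :=
    (hst.hasStrictFDerivAt_equiv hne).localInverse_apply_image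
  have hev1 : ∀ᶠ y in 𝓝 z, psi a b (l y) = y := by
    rw [← hpsiz]
    exact (hst.hasStrictFDerivAt_equiv hne).eventually_right_inverse
  have hev2 : ∀ᶠ y in 𝓝 z, l y ∈ EE := by
    rw [← hpsiz]
    exact hcont.eventually_mem (isOpen_EE.mem_nhds (by rw [hlz]; exact hE))
  have heq : phi a b =ᶠ[𝓝 z] l := by
    filter_upwards [hev1, hev2] with y h1 h2
    exact psi_injOn hab (invFunOn_mem ⟨l y, h2, h1⟩) h2
      (by rw [invFunOn_eq ⟨l y, h2, h1⟩, h1])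
  have : DifferentiableAt ℂ l z := by
    rw [← hpsiz]; exact hli.hasDerivAt.differentiableAt
  exact (heq.differentiableAt_iff).2 this

lemma norm_psi_dist (hab : a < b) {w : ℂ} (hw : w ∈ EE) :
    (b-a)/2 / 2 * (‖w‖ - 1) ≤ ‖psi a b w - (((a+b)/2 : ℝ) : ℂ)‖ ∧
    ‖psi a b w - (((a+b)/2 : ℝ) : ℂ)‖ ≤ (b-a)/2 / 2 * (‖w‖ + 1) := by
  have hw1 : 1 < ‖w‖ := hw
  have h0 : w ≠ 0 := ne_zero_of_mem_EE hw
  have hr : (0:ℝ) < (b-a)/2 := by linarith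
  have hdist : psi a b w - (((a+b)/2 : ℝ) : ℂ) = (((b-a)/2 : ℝ) : ℂ) * (w + w⁻¹) / 2 := by
    unfold psi; ring
  have hnorm : ‖psi a b w - (((a+b)/2 : ℝ) : ℂ)‖ = (b-a)/2 * ‖w + w⁻¹‖ / 2 := by
    rw [hdist, norm_div, norm_mul, Complex.norm_real, Real.norm_of_nonneg hr.le]
    norm_num
  have hinv : ‖w⁻¹‖ ≤ 1 := by
    rw [norm_inv]
    rw [inv_le_one_iff₀]; right; linarith
  have hup : ‖w + w⁻¹‖ ≤ ‖w‖ + 1 := le_trans (norm_add_le _ _) (by linarith)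
  have hlo : ‖w‖ - 1 ≤ ‖w + w⁻¹‖ := by
    have h := norm_add_le (w + w⁻¹) (-w⁻¹)
    simp only [add_neg_cancel_right, norm_neg] at h
    linarith
  rw [hnorm]
  constructor <;> nlinarith

lemma norm_psi_lower (hab : a < b) {w : ℂ} (hw : w ∈ EE) :
    (b-a)/2/2 * (‖w‖ - 1) - |(a+b)/2| ≤ ‖psi a b w‖ := by
  have h1 := (norm_psi_dist hab hw).1
  have h2 := norm_sub_le (psi a b w) (((a+b)/2 : ℝ) : ℂ)
  rw [Complex.norm_real, Real.norm_eq_abs] at h2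
  linarith

lemma norm_phi_lower (hab : a < b) {z : ℂ} (hz : ∃ w ∈ EE, psi a b w = z) :
    2 / ((b-a)/2) * ‖z - (((a+b)/2 : ℝ) : ℂ)‖ - 1 ≤ ‖phi a b z‖ := by
  obtain ⟨hE, heq⟩ := phi_spec hab hz
  have h2 := (norm_psi_dist hab hE).2
  rw [heq] at h2
  have hr : (0:ℝ) < (b-a)/2 := by linarith
  have key : 2 / ((b-a)/2) * ‖z - (((a+b)/2 : ℝ) : ℂ)‖ ≤ ‖phi a b z‖ + 1 := by
    rw [div_mul_eq_mul_div, div_le_iff₀ hr]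
    nlinarith
  linarith

lemma tendsto_norm_inv : Tendsto (fun u : ℂ => ‖u⁻¹‖) (𝓝[≠] (0:ℂ)) atTop := by
  have h0 : Tendsto (fun u : ℂ => ‖u‖) (𝓝[≠] (0:ℂ)) (𝓝[>] 0) := by
    apply tendsto_nhdsWithin_of_tendsto_nhds_of_eventually_within
    · have h1 : Tendsto (fun u : ℂ => ‖u‖) (𝓝 0) (𝓝 ‖(0:ℂ)‖) := continuous_norm.tendsto 0
      simpa using h1.mono_left nhdsWithin_le_nhds
    · filter_upwards [self_mem_nhdsWithin] with u hu
      exact norm_pos_iff.2 hu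
  simpa [norm_inv, Pi.inv_def] using h0.inv_tendsto_nhdsGT_zero

lemma tendsto_norm_psi_inv (hab : a < b) :
    Tendsto (fun u : ℂ => ‖psi a b u⁻¹‖) (𝓝[≠] (0:ℂ)) atTop := by
  have hn := tendsto_norm_inv
  have hlin : Tendsto (fun u : ℂ => (b-a)/2/2 * (‖u⁻¹‖ - 1) - |(a+b)/2|)
      (𝓝[≠] (0:ℂ)) atTop := by
    have hr : (0:ℝ) < (b-a)/2/2 := by linarith
    exact tendsto_atTop_add_const_right _ _
      (((tendsto_atTop_add_const_right _ (-1) hn).const_mul_atTop hr).congr (by intro x; ring_nf))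
  apply tendsto_atTop_mono' _ _ hlin
  have hev : ∀ᶠ u : ℂ in 𝓝[≠] (0:ℂ), 1 < ‖u⁻¹‖ := hn.eventually_gt_atTop 1
  filter_upwards [hev] with u hu
  exact norm_psi_lower hab hu

/-- The conjugated map near the superattracting fixed point at infinity. -/
def gfun (a b : ℝ) (q : ℂ[X]) (u : ℂ) : ℂ :=
  if u = 0 then 0 else (phi a b (q.eval (psi a b u⁻¹)))⁻¹

lemma inv_mem_EE {u : ℂ} (hu0 : u ≠ 0) (hu1 : ‖u‖ < 1) : u⁻¹ ∈ EE := by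
  have : 1 < ‖u⁻¹‖ := by
    rw [norm_inv]
    rw [one_lt_inv_iff₀]
    exact ⟨norm_pos_iff.2 hu0, hu1⟩
  exact this

variable {q : ℂ[X]}

lemma qpsi_not_mem (hab : a < b) (hq : ∀ z, z ∉ SS a b → q.eval z ∉ SS a b)
    {u : ℂ} (hu0 : u ≠ 0) (hu1 : ‖u‖ < 1) :
    q.eval (psi a b u⁻¹) ∉ SS a b :=
  hq _ (psi_not_mem_SS hab (inv_mem_EE hu0 hu1))

lemma one_lt_norm_phi_qpsi (hab : a < b) (hq : ∀ z, z ∉ SS a b → q.eval z ∉ SS a b)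
    {u : ℂ} (hu0 : u ≠ 0) (hu1 : ‖u‖ < 1) :
    1 < ‖phi a b (q.eval (psi a b u⁻¹))‖ :=
  (phi_spec hab (exists_psi_eq hab (qpsi_not_mem hab hq hu0 hu1))).1

lemma gfun_differentiableAt (hab : a < b) (hq : ∀ z, z ∉ SS a b → q.eval z ∉ SS a b)
    {u : ℂ} (hu0 : u ≠ 0) (hu1 : ‖u‖ < 1) :
    DifferentiableAt ℂ (gfun a b q) u := by
  have hE : u⁻¹ ∈ EE := inv_mem_EE hu0 hu1
  have hex : ∃ w ∈ EE, psi a b w = q.eval (psi a b u⁻¹) :=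
    exists_psi_eq hab (qpsi_not_mem hab hq hu0 hu1)
  have hphiE := (phi_spec hab hex).1
  have d1 : DifferentiableAt ℂ (fun u : ℂ => u⁻¹) u := differentiableAt_inv hu0
  have d2 : DifferentiableAt ℂ (psi a b) u⁻¹ :=
    (hasStrictDerivAt_psi (inv_ne_zero hu0)).hasDerivAt.differentiableAt
  have d3 : DifferentiableAt ℂ (fun z => q.eval z) (psi a b u⁻¹) :=
    Polynomial.differentiableAt (p := q)
  have d4 : DifferentiableAt ℂ (phi a b) (q.eval (psi a b u⁻¹)) :=
    phi_differentiableAt hab hex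
  have dA : DifferentiableAt ℂ (fun v : ℂ => psi a b v⁻¹) u := d2.comp u d1
  have dB : DifferentiableAt ℂ (fun v : ℂ => q.eval (psi a b v⁻¹)) u := DifferentiableAt.comp (g := fun z => q.eval z) u d3 dA
  have dC : DifferentiableAt ℂ (fun v : ℂ => phi a b (q.eval (psi a b v⁻¹))) u := d4.comp u dB
  have dcomp : DifferentiableAt ℂ (fun v : ℂ => (phi a b (q.eval (psi a b v⁻¹)))⁻¹) u :=
    dC.inv (ne_zero_of_mem_EE hphiE)
  apply dcomp.congr_of_eventuallyEq
  filter_upwards [isOpen_compl_singleton.mem_nhds (by simpa using hu0 :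
      u ∈ ({0}ᶜ : Set ℂ))] with v hv
  simp only [gfun, if_neg (by simpa using hv : v ≠ (0:ℂ))]

lemma gfun_ev_bound (hab : a < b) (hq : ∀ z, z ∉ SS a b → q.eval z ∉ SS a b)
    (hqd : 1 < q.natDegree) : ∀ᶠ u : ℂ in 𝓝[≠] (0:ℂ),
    ‖gfun a b q u‖ * ‖u⁻¹‖ ≤ 8 / ‖(q.divX).eval (psi a b u⁻¹)‖ := by
  obtain ⟨r, hrdef⟩ : ∃ r : ℝ, r = (b-a)/2 := ⟨_, rfl⟩
  obtain ⟨c, hcdef⟩ : ∃ c : ℝ, c = (a+b)/2 := ⟨_, rfl⟩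
  obtain ⟨K₁, hK₁⟩ : ∃ k : ℝ, k = ‖q.coeff 0‖ := ⟨_, rfl⟩
  obtain ⟨K₂, hK₂⟩ : ∃ k : ℝ, k = 2/r * (K₁ + |c|) + 1 := ⟨_, rfl⟩
  have hr : (0:ℝ) < r := by rw [hrdef]; linarith
  have hK₁0 : 0 ≤ K₁ := by rw [hK₁]; positivity
  have hK₂pos : 0 < K₂ := by rw [hK₂]; positivity
  have hBtop : Tendsto (fun u : ℂ => ‖(q.divX).eval (psi a b u⁻¹)‖) (𝓝[≠] (0:ℂ)) atTop := by
    apply Polynomial.tendsto_norm_atTop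
    · have h1 : 0 < q.divX.natDegree := by
        have := Polynomial.natDegree_divX_eq_natDegree_tsub_one (p := q); omega
      exact Polynomial.natDegree_pos_iff_degree_pos.mp h1
    · exact tendsto_norm_psi_inv hab
  have e1 : ∀ᶠ u : ℂ in 𝓝[≠] (0:ℂ), 1 < ‖u⁻¹‖ := tendsto_norm_inv.eventually_gt_atTop 1
  have e2 : ∀ᶠ u : ℂ in 𝓝[≠] (0:ℂ), r/4 + |c| ≤ r/8 * ‖u⁻¹‖ :=
    (tendsto_norm_inv.const_mul_atTop (by positivity : (0:ℝ) < r/8)).eventually_ge_atTop _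
  have e3 : ∀ᶠ u : ℂ in 𝓝[≠] (0:ℂ), 1 ≤ ‖(q.divX).eval (psi a b u⁻¹)‖ :=
    hBtop.eventually_ge_atTop 1
  have e4 : ∀ᶠ u : ℂ in 𝓝[≠] (0:ℂ),
      8*K₂ ≤ ‖u⁻¹‖ * ‖(q.divX).eval (psi a b u⁻¹)‖ :=
    (tendsto_norm_inv.atTop_mul_atTop₀ hBtop).eventually_ge_atTop _
  filter_upwards [e1, e2, e3, e4] with u h1 h2 h3 h4
  have hu0 : u ≠ 0 := by
    intro h; rw [h] at h1; norm_num at h1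
  have hu1 : ‖u‖ < 1 := by
    rw [norm_inv, one_lt_inv_iff₀] at h1; exact h1.2
  have hE : u⁻¹ ∈ EE := inv_mem_EE hu0 hu1
  obtain ⟨n, hn⟩ : ∃ n : ℝ, n = ‖u⁻¹‖ := ⟨_, rfl⟩
  obtain ⟨B, hB⟩ : ∃ n : ℝ, n = ‖(q.divX).eval (psi a b u⁻¹)‖ := ⟨_, rfl⟩
  obtain ⟨P, hP⟩ : ∃ n : ℝ, n = ‖psi a b u⁻¹‖ := ⟨_, rfl⟩
  obtain ⟨Q, hQ⟩ : ∃ n : ℝ, n = ‖q.eval (psi a b u⁻¹)‖ := ⟨_, rfl⟩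
  rw [← hn] at h1 h2 h4
  rw [← hB] at h3 h4
  rw [← hn, ← hB]
  have hPpos : 0 ≤ P := by rw [hP]; positivity
  have hBpos : (0:ℝ) < B := by linarith
  have hnpos : (0:ℝ) < n := by linarith
  have hpsilow : r/8 * n ≤ P := by
    have hlow := norm_psi_lower hab hE
    rw [← hrdef, ← hcdef, ← hn, ← hP] at hlow
    nlinarith
  have heval : q.eval (psi a b u⁻¹) =
      (q.divX).eval (psi a b u⁻¹) * psi a b u⁻¹ + q.coeff 0 := by
    conv_lhs => rw [← Polynomial.divX_mul_X_add q]
    simp [Polynomial.eval_add, Polynomial.eval_mul]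
  have hqlow : P * B - K₁ ≤ Q := by
    have h5 := norm_add_le ((q.divX).eval (psi a b u⁻¹) * psi a b u⁻¹ + q.coeff 0) (-q.coeff 0)
    simp only [add_neg_cancel_right, norm_neg] at h5
    rw [norm_mul, ← heval, ← hK₁, ← hB, ← hP, ← hQ] at h5
    nlinarith
  have hexq : ∃ w ∈ EE, psi a b w = q.eval (psi a b u⁻¹) :=
    exists_psi_eq hab (qpsi_not_mem hab hq hu0 hu1)
  have hphi := norm_phi_lower hab hexq
  rw [← hrdef, ← hcdef] at hphi
  have hsub : Q - |c| ≤ ‖q.eval (psi a b u⁻¹) - ((c:ℝ):ℂ)‖ := by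
    have h6 := norm_sub_norm_le (q.eval (psi a b u⁻¹)) ((c:ℝ):ℂ)
    rw [Complex.norm_real, Real.norm_eq_abs, ← hQ] at h6
    linarith
  have hphimain : n * B / 8 ≤ ‖phi a b (q.eval (psi a b u⁻¹))‖ := by
    have step1 : r/8*n*B - K₁ ≤ Q := by nlinarith
    have step2 : 2/r * (r/8*n*B - K₁ - |c|) ≤ 2/r * ‖q.eval (psi a b u⁻¹) - ((c:ℝ):ℂ)‖ := by
      apply mul_le_mul_of_nonneg_left _ (by positivity)
      linarith
    have hchain : 2/r * (r/8 * n * B - K₁ - |c|) - 1 ≤ ‖phi a b (q.eval (psi a b u⁻¹))‖ := by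
      linarith
    have hsimp : 2/r * (r/8 * n * B - K₁ - |c|) - 1 = n*B/4 - K₂ := by
      rw [hK₂]; field_simp; ring
    rw [hsimp] at hchain
    linarith
  have hgval : ‖gfun a b q u‖ = ‖phi a b (q.eval (psi a b u⁻¹))‖⁻¹ := by
    rw [gfun, if_neg hu0, norm_inv]
  rw [hgval]
  have hpos : (0:ℝ) < n * B / 8 := by positivity
  have hinv : ‖phi a b (q.eval (psi a b u⁻¹))‖⁻¹ ≤ (n * B / 8)⁻¹ :=
    inv_anti₀ hpos hphimain
  calc ‖phi a b (q.eval (psi a b u⁻¹))‖⁻¹ * n ≤ (n*B/8)⁻¹ * n := by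
        apply mul_le_mul_of_nonneg_right hinv (by linarith)
    _ = 8 / B := by field_simp

lemma gfun_zero : gfun a b q 0 = 0 := if_pos rfl

lemma tendsto_gfun_div (hab : a < b) (hq : ∀ z, z ∉ SS a b → q.eval z ∉ SS a b)
    (hqd : 1 < q.natDegree) :
    Tendsto (fun u : ℂ => gfun a b q u / u) (𝓝[≠] (0:ℂ)) (𝓝 0) := by
  have hBtop : Tendsto (fun u : ℂ => ‖(q.divX).eval (psi a b u⁻¹)‖) (𝓝[≠] (0:ℂ)) atTop := by
    apply Polynomial.tendsto_norm_atTop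
    · have h1 : 0 < q.divX.natDegree := by
        have := Polynomial.natDegree_divX_eq_natDegree_tsub_one (p := q); omega
      exact Polynomial.natDegree_pos_iff_degree_pos.mp h1
    · exact tendsto_norm_psi_inv hab
  have hzero : Tendsto (fun u : ℂ => 8 / ‖(q.divX).eval (psi a b u⁻¹)‖)
      (𝓝[≠] (0:ℂ)) (𝓝 0) := by
    simp only [div_eq_mul_inv]
    simpa using hBtop.inv_tendsto_atTop.const_mul (8:ℝ)
  apply squeeze_zero_norm' _ hzero
  filter_upwards [gfun_ev_bound hab hq hqd] with u hu
  rwa [norm_div, div_eq_mul_inv, ← norm_inv]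

lemma tendsto_gfun (hab : a < b) (hq : ∀ z, z ∉ SS a b → q.eval z ∉ SS a b)
    (hqd : 1 < q.natDegree) : Tendsto (gfun a b q) (𝓝[≠] (0:ℂ)) (𝓝 0) := by
  have h0 : Tendsto (fun u : ℂ => u) (𝓝[≠] (0:ℂ)) (𝓝 0) :=
    (continuous_id.tendsto 0).mono_left nhdsWithin_le_nhds
  have := (tendsto_gfun_div hab hq hqd).mul h0
  rw [mul_zero] at this
  apply this.congr'
  filter_upwards [self_mem_nhdsWithin] with u hu
  exact div_mul_cancel₀ _ (by simpa using hu)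

lemma continuousAt_gfun_zero (hab : a < b) (hq : ∀ z, z ∉ SS a b → q.eval z ∉ SS a b)
    (hqd : 1 < q.natDegree) : ContinuousAt (gfun a b q) 0 := by
  have h : Tendsto (gfun a b q) (𝓝[≠] (0:ℂ) ⊔ pure 0) (𝓝 0) :=
    tendsto_sup.2 ⟨tendsto_gfun hab hq hqd,
      by simpa [gfun_zero] using tendsto_pure_nhds (gfun a b q) 0⟩
  rw [ContinuousAt, gfun_zero]
  rwa [nhdsNE_sup_pure] at h

lemma gfun_diffOn (hab : a < b) (hq : ∀ z, z ∉ SS a b → q.eval z ∉ SS a b)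
    (hqd : 1 < q.natDegree) : DifferentiableOn ℂ (gfun a b q) (ball (0:ℂ) 1) := by
  intro u hu
  rcases eq_or_ne u 0 with rfl | hu0
  · apply DifferentiableAt.differentiableWithinAt
    apply (analyticAt_of_differentiable_on_punctured_nhds_of_continuousAt ?_
      (continuousAt_gfun_zero hab hq hqd)).differentiableAt
    filter_upwards [mem_nhdsWithin_of_mem_nhds (ball_mem_nhds (0:ℂ) one_pos),
      self_mem_nhdsWithin] with v hv hv0
    exact gfun_differentiableAt hab hq (by simpa using hv0) (mem_ball_zero_iff.1 hv)
  · exact (gfun_differentiableAt hab hq hu0 (mem_ball_zero_iff.1 hu)).differentiableWithinAt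

lemma gfun_mapsTo (hab : a < b) (hq : ∀ z, z ∉ SS a b → q.eval z ∉ SS a b) :
    MapsTo (gfun a b q) (ball (0:ℂ) 1) (ball (gfun a b q 0) 1) := by
  intro u hu
  rw [gfun_zero, mem_ball_zero_iff]
  rcases eq_or_ne u 0 with rfl | hu0
  · rw [gfun_zero]; norm_num
  · rw [gfun, if_neg hu0, norm_inv]
    exact inv_lt_one_of_one_lt₀ (one_lt_norm_phi_qpsi hab hq hu0 (mem_ball_zero_iff.1 hu))

lemma deriv_gfun_zero (hab : a < b) (hq : ∀ z, z ∉ SS a b → q.eval z ∉ SS a b)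
    (hqd : 1 < q.natDegree) : deriv (gfun a b q) 0 = 0 := by
  have hd : DifferentiableAt ℂ (gfun a b q) 0 :=
    (gfun_diffOn hab hq hqd).differentiableAt (ball_mem_nhds (0:ℂ) one_pos)
  have h1 : Tendsto (slope (gfun a b q) 0) (𝓝[≠] (0:ℂ)) (𝓝 (deriv (gfun a b q) 0)) :=
    hasDerivAt_iff_tendsto_slope.1 hd.hasDerivAt
  have h2 : Tendsto (slope (gfun a b q) 0) (𝓝[≠] (0:ℂ)) (𝓝 0) := by
    apply (tendsto_gfun_div hab hq hqd).congr'
    filter_upwards [self_mem_nhdsWithin] with u hu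
    rw [slope_def_field, gfun_zero, sub_zero, sub_zero]
  exact tendsto_nhds_unique h1 h2

lemma hfun_le (hab : a < b) (hq : ∀ z, z ∉ SS a b → q.eval z ∉ SS a b)
    (hqd : 1 < q.natDegree) {z : ℂ} (hz : z ∈ ball (0:ℂ) 1) :
    ‖dslope (gfun a b q) 0 z‖ ≤ ‖z‖ := by
  have hdiff : DifferentiableOn ℂ (dslope (gfun a b q) 0) (ball (0:ℂ) 1) :=
    (differentiableOn_dslope (ball_mem_nhds (0:ℂ) one_pos)).2 (gfun_diffOn hab hq hqd)
  have hzero : dslope (gfun a b q) 0 0 = 0 := by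
    rw [dslope_same]; exact deriv_gfun_zero hab hq hqd
  have hbound : ∀ y ∈ ball (0:ℂ) 1, ‖dslope (gfun a b q) 0 y‖ ≤ 1 := by
    intro y hy
    have := norm_dslope_le_div_of_mapsTo_ball (gfun_diffOn hab hq hqd)
      ((gfun_mapsTo hab hq).mono_right ball_subset_closedBall) hy
    simpa using this
  rcases eq_or_ne z 0 with rfl | hz0
  · rw [hzero]
  by_contra hlt
  push_neg at hlt
  have hs : (0:ℝ) < ‖z‖ := norm_pos_iff.2 hz0
  set s := ‖z‖
  set t := ‖dslope (gfun a b q) 0 z‖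
  have hR : 1 < (s + t)/(2*s) := by
    rw [lt_div_iff₀ (by linarith)]; linarith
  have hmaps : MapsTo (dslope (gfun a b q) 0) (ball (0:ℂ) 1)
      (ball (dslope (gfun a b q) 0 0) ((s + t)/(2*s))) := by
    intro y hy
    rw [hzero, mem_ball_zero_iff]
    exact lt_of_le_of_lt (hbound y hy) hR
  have := dist_le_div_mul_dist_of_mapsTo_ball hdiff (hmaps.mono_right ball_subset_closedBall) hz
  rw [hzero, dist_zero_right, dist_zero_right] at this
  have h2 : t ≤ (s + t)/(2*s) * s := by simpa using this
  have h3 : (s + t)/(2*s) * s = (s+t)/2 := by field_simp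
  rw [h3] at h2
  linarith

lemma key_norm (hab : a < b) (hq : ∀ z, z ∉ SS a b → q.eval z ∉ SS a b)
    (hqd : 1 < q.natDegree) {z : ℂ} (hz : z ∈ ball (0:ℂ) 1) :
    ‖gfun a b q z‖ ≤ ‖z‖^2 := by
  rcases eq_or_ne z 0 with rfl | hz0
  · rw [gfun_zero]; simp
  have hsub := sub_smul_dslope (gfun a b q) 0 z
  rw [sub_zero, gfun_zero, sub_zero, smul_eq_mul] at hsub
  rw [← hsub, norm_mul, sq]
  exact mul_le_mul_of_nonneg_left (hfun_le hab hq hqd hz) (norm_nonneg z)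

lemma main_ineq (hab : a < b) (hq : ∀ z, z ∉ SS a b → q.eval z ∉ SS a b)
    (hqd : 1 < q.natDegree) {z : ℂ} (hz : z ∉ SS a b) :
    ‖phi a b z‖^2 ≤ ‖phi a b (q.eval z)‖ := by
  obtain ⟨hE, heq⟩ := phi_spec hab (exists_psi_eq hab hz)
  have h1 : 1 < ‖phi a b z‖ := hE
  set w := phi a b z
  have hw0 : w ≠ 0 := ne_zero_of_mem_EE hE
  have hu0 : w⁻¹ ≠ 0 := inv_ne_zero hw0
  have hub : w⁻¹ ∈ ball (0:ℂ) 1 :=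
    mem_ball_zero_iff.2 (by rw [norm_inv]; exact inv_lt_one_of_one_lt₀ h1)
  have hgv : gfun a b q w⁻¹ = (phi a b (q.eval z))⁻¹ := by
    rw [gfun, if_neg hu0, inv_inv, heq]
  have hkey := key_norm hab hq hqd hub
  rw [hgv, norm_inv, norm_inv, inv_pow] at hkey
  have h2 : 1 < ‖phi a b (q.eval z)‖ := (phi_spec hab (exists_psi_eq hab (hq z hz))).1
  have hp2 : (0:ℝ) < ‖w‖^2 := by positivity
  exact (inv_le_inv₀ (by linarith) hp2).1 hkey

lemma escape (hab : a < b) (hq : ∀ z, z ∉ SS a b → q.eval z ∉ SS a b)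
    (hqd : 1 < q.natDegree) {z : ℂ} (hz : z ∉ SS a b) :
    ¬ Bornology.IsBounded (Set.range fun n => (fun w => q.eval w)^[n] z) := by
  intro hbd
  obtain ⟨C, hC⟩ := isBounded_iff_forall_norm_le.1 hbd
  have hnot : ∀ n, (fun w => q.eval w)^[n] z ∉ SS a b := by
    intro n
    induction n with
    | zero => simpa
    | succ n ih => rw [Function.iterate_succ_apply']; exact hq _ ih
  have hgrow : ∀ n, ‖phi a b z‖ ^ (2^n) ≤ ‖phi a b ((fun w => q.eval w)^[n] z)‖ := by
    intro n
    induction n with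
    | zero => simp
    | succ n ih =>
      rw [Function.iterate_succ_apply']
      calc ‖phi a b z‖^(2^(n+1)) = (‖phi a b z‖^(2^n))^2 := by
            rw [← pow_mul, pow_succ]
        _ ≤ ‖phi a b ((fun w => q.eval w)^[n] z)‖^2 :=
            pow_le_pow_left₀ (by positivity) ih 2
        _ ≤ ‖phi a b (q.eval ((fun w => q.eval w)^[n] z))‖ :=
            main_ineq hab hq hqd (hnot n)
  have h1 : 1 < ‖phi a b z‖ := (phi_spec hab (exists_psi_eq hab hz)).1
  have hr : (0:ℝ) < (b-a)/2/2 := by linarith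
  have hbound : ∀ n : ℕ, ‖phi a b z‖^(2^n) ≤ (C + |(a+b)/2|) / ((b-a)/2/2) + 1 := by
    intro n
    have hx := phi_spec hab (exists_psi_eq hab (hnot n))
    have hlow := norm_psi_lower hab hx.1
    rw [hx.2] at hlow
    have hCn : ‖(fun w => q.eval w)^[n] z‖ ≤ C := hC _ (Set.mem_range_self n)
    have hstep : ‖phi a b ((fun w => q.eval w)^[n] z)‖ - 1 ≤
        (C + |(a+b)/2|) / ((b-a)/2/2) := by
      rw [le_div_iff₀ hr]
      nlinarith
    linarith [hgrow n]
  have htop : Tendsto (fun n : ℕ => ‖phi a b z‖^(2^n)) atTop atTop := by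
    have h2 : Tendsto (fun n : ℕ => 2^n) atTop atTop :=
      tendsto_pow_atTop_atTop_of_one_lt one_lt_two
    exact (tendsto_pow_atTop_atTop_of_one_lt h1).comp h2
  obtain ⟨n, hn⟩ := (htop.eventually_gt_atTop ((C + |(a+b)/2|) / ((b-a)/2/2) + 1)).exists
  exact absurd (hbound n) (not_le.2 hn)

end
end Stmt8

/-- If for some nondegenerate real interval `[a,b]` all complex preimages under a real
polynomial `p` of degree `> 1` of points of `[a,b]` lie in `[a,b]`, then the Julia set
of `p` is real. -/
theorem stmt_8 (p : Polynomial ℝ) (hd : 1 < p.natDegree) (a b : ℝ) (hab : a < b)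
    (hinv : ∀ z : ℂ, (p.map (algebraMap ℝ ℂ)).eval z ∈ (fun x : ℝ => (x : ℂ)) '' Set.Icc a b →
      z ∈ (fun x : ℝ => (x : ℂ)) '' Set.Icc a b) :
    ∀ z ∈ juliaSet (p.map (algebraMap ℝ ℂ)), z.im = 0 := by
  intro z hz
  set q : Polynomial ℂ := p.map (algebraMap ℝ ℂ) with hqdef
  have hqd : 1 < q.natDegree := by rwa [hqdef, Polynomial.natDegree_map]
  have hq : ∀ w, w ∉ Stmt8.SS a b → q.eval w ∉ Stmt8.SS a b := fun w hw hmem =>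
    hw (hinv w hmem)
  have hsub : filledJuliaSet q ⊆ Stmt8.SS a b := by
    intro w hw
    by_contra hns
    exact Stmt8.escape hab hq hqd hns hw
  have hclosed : IsClosed (Stmt8.SS a b) :=
    (isCompact_Icc.image Complex.continuous_ofReal).isClosed
  have hmem : z ∈ Stmt8.SS a b := by
    have h1 : z ∈ closure (filledJuliaSet q) := frontier_subset_closure hz
    have h2 : z ∈ closure (Stmt8.SS a b) := closure_mono hsub h1
    rwa [hclosed.closure_eq] at h2
  exact (Stmt8.mem_SS_iff.1 hmem).1
end

section
/- Let p be a real polynomial whose Julia set is real, with a = min J(p) and b = max J(p). Then p maps the two-point set {a, b} into itself; consequently, either one of a, b is a fixed point of p, or {a, b} is a 2-cycle of p. -/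
open Filter Bornology Set Polynomial

lemma escape_aux (P : Polynomial ℂ) (hd : 1 < P.natDegree) :
    ∃ R : ℝ, 1 ≤ R ∧ ∀ z : ℂ, R ≤ ‖z‖ → 2 * ‖z‖ ≤ ‖P.eval z‖ := by
  set d := P.natDegree with hdn
  have hP0 : P ≠ 0 := fun h => by simp [hdn, h] at hd
  set c := ‖P.leadingCoeff‖ with hcdef
  have hc : 0 < c := norm_pos_iff.2 (Polynomial.leadingCoeff_ne_zero.2 hP0)
  set C := ∑ i ∈ Finset.range d, ‖P.coeff i‖ with hCdef
  have hC0 : 0 ≤ C := Finset.sum_nonneg fun i _ => norm_nonneg _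
  refine ⟨max 1 ((C + 2)/c), le_max_left _ _, ?_⟩
  intro z hz
  have hz1 : (1:ℝ) ≤ ‖z‖ := le_trans (le_max_left _ _) hz
  have hz2 : C + 2 ≤ c * ‖z‖ := by
    have h := le_trans (le_max_right 1 ((C+2)/c)) hz
    rw [div_le_iff₀ hc] at h
    linarith
  obtain ⟨e, hde⟩ : ∃ e, d = e + 1 := ⟨d - 1, by omega⟩
  have he1 : 1 ≤ e := by omega
  have he : P.leadingCoeff * z ^ d = P.eval z - ∑ i ∈ Finset.range d, P.coeff i * z ^ i := by
    rw [Polynomial.eval_eq_sum_range, ← hdn, Finset.sum_range_succ, Polynomial.coeff_natDegree]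
    ring
  have hsum : ‖∑ i ∈ Finset.range d, P.coeff i * z ^ i‖ ≤ C * ‖z‖ ^ e := by
    calc ‖∑ i ∈ Finset.range d, P.coeff i * z ^ i‖
        ≤ ∑ i ∈ Finset.range d, ‖P.coeff i‖ * ‖z‖ ^ i := by
          refine le_trans (norm_sum_le _ _) (Finset.sum_le_sum fun i _ => ?_)
          rw [norm_mul, norm_pow]
      _ ≤ ∑ i ∈ Finset.range d, ‖P.coeff i‖ * ‖z‖ ^ e := by
          refine Finset.sum_le_sum fun i hi => ?_
          have hie : i ≤ e := by have := Finset.mem_range.1 hi; omega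
          exact mul_le_mul_of_nonneg_left (pow_le_pow_right₀ hz1 hie) (norm_nonneg _)
      _ = C * ‖z‖ ^ e := by rw [← Finset.sum_mul]
  have hlead : ‖P.leadingCoeff * z ^ d‖ = c * ‖z‖ ^ d := by
    rw [norm_mul, norm_pow]
  have h1 : c * ‖z‖ ^ d ≤ ‖P.eval z‖ + C * ‖z‖ ^ e := by
    calc c * ‖z‖ ^ d = ‖P.leadingCoeff * z ^ d‖ := hlead.symm
      _ ≤ ‖P.eval z‖ + ‖∑ i ∈ Finset.range d, P.coeff i * z ^ i‖ := by
          rw [he]; exact norm_sub_le _ _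
      _ ≤ ‖P.eval z‖ + C * ‖z‖ ^ e := by linarith
  have hze : ‖z‖ ≤ ‖z‖ ^ e := by
    calc ‖z‖ = ‖z‖ ^ 1 := (pow_one _).symm
      _ ≤ ‖z‖ ^ e := pow_le_pow_right₀ hz1 he1
  have hzd : ‖z‖ ^ d = ‖z‖ ^ e * ‖z‖ := by rw [hde, pow_succ]
  nlinarith [norm_nonneg z, pow_nonneg (norm_nonneg z) e]


/-- A real polynomial with real Julia set maps `{min J(p), max J(p)}` into itself;
consequently one of the endpoints is a fixed point, or they form a `2`-cycle. -/
theorem stmt_9 (p : Polynomial ℝ) (hd : 1 < p.natDegree)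
    (hJ : ∀ z ∈ juliaSet (p.map (algebraMap ℝ ℂ)), z.im = 0)
    (a b : ℝ)
    (ha : IsLeast {x : ℝ | (x : ℂ) ∈ juliaSet (p.map (algebraMap ℝ ℂ))} a)
    (hb : IsGreatest {x : ℝ | (x : ℂ) ∈ juliaSet (p.map (algebraMap ℝ ℂ))} b) :
    (p.eval a ∈ ({a, b} : Set ℝ) ∧ p.eval b ∈ ({a, b} : Set ℝ)) ∧
      ((p.eval a = a ∨ p.eval b = b) ∨ (p.eval a = b ∧ p.eval b = a)) := by
  set P := p.map (algebraMap ℝ ℂ) with hPdef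
  set f : ℂ → ℂ := fun w => P.eval w with hfdef
  set K := filledJuliaSet P with hKdef
  have hdP : 1 < P.natDegree := by
    rwa [hPdef, Polynomial.natDegree_map_eq_of_injective (algebraMap ℝ ℂ).injective]
  -- complete invariance of the filled Julia set
  have hKmem : ∀ y : ℂ, y ∈ K ↔ IsBounded (Set.range fun n => f^[n] y) :=
    fun y => Iff.rfl
  have hinv : ∀ z : ℂ, f z ∈ K ↔ z ∈ K := by
    intro z
    rw [hKmem, hKmem]
    constructor
    · intro hz
      have hsub : (Set.range fun n => f^[n] z) ⊆
          insert z (Set.range fun n => f^[n] (f z)) := by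
        rintro _ ⟨n, rfl⟩
        cases n with
        | zero => exact Or.inl rfl
        | succ m => exact Or.inr ⟨m, (Function.iterate_succ_apply f m z).symm⟩
      exact (hz.insert z).subset hsub
    · intro hz
      have hsub : (Set.range fun n => f^[n] (f z)) ⊆ (Set.range fun n => f^[n] z) := by
        rintro _ ⟨n, rfl⟩
        exact ⟨n + 1, Function.iterate_succ_apply f n z⟩
      exact hz.subset hsub
  -- escape radius
  obtain ⟨R, hR1, hResc⟩ := escape_aux P hdP
  have hR0 : (0:ℝ) < R := lt_of_lt_of_le one_pos hR1
  have hgrow : ∀ z : ℂ, R ≤ ‖z‖ → ∀ n : ℕ, 2 ^ n * ‖z‖ ≤ ‖f^[n] z‖ := by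
    intro z hz n
    induction n with
    | zero => simp
    | succ m ih =>
      have hm : R ≤ ‖f^[m] z‖ := by
        calc R ≤ ‖z‖ := hz
          _ = 1 * ‖z‖ := (one_mul _).symm
          _ ≤ 2 ^ m * ‖z‖ := by
              have : (1:ℝ) ≤ 2 ^ m := one_le_pow₀ (by norm_num : (1:ℝ) ≤ 2)
              nlinarith [norm_nonneg z]
          _ ≤ ‖f^[m] z‖ := ih
      calc (2:ℝ) ^ (m+1) * ‖z‖ = 2 * (2 ^ m * ‖z‖) := by ring
        _ ≤ 2 * ‖f^[m] z‖ := by linarith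
        _ ≤ ‖P.eval (f^[m] z)‖ := hResc _ hm
        _ = ‖f^[m+1] z‖ := by rw [Function.iterate_succ_apply']
  -- points of K never leave the closed ball of radius R
  have hKbound : ∀ z ∈ K, ∀ n : ℕ, ‖f^[n] z‖ ≤ R := by
    intro z hz n
    by_contra hcon
    push_neg at hcon
    obtain ⟨r, hr⟩ := ((hKmem z).1 hz).subset_closedBall 0
    obtain ⟨m, hm⟩ := pow_unbounded_of_one_lt (R := ℝ) r (by norm_num : (1:ℝ) < 2)
    have h1 : 2 ^ m * ‖f^[n] z‖ ≤ ‖f^[m] (f^[n] z)‖ := hgrow _ hcon.le m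
    have h2 : f^[m] (f^[n] z) = f^[m + n] z := (Function.iterate_add_apply f m n z).symm
    have h3 : f^[m + n] z ∈ Set.range fun k => f^[k] z := ⟨m + n, rfl⟩
    have h4 : ‖f^[m + n] z‖ ≤ r := by
      have := hr h3
      simpa [Metric.mem_closedBall] using this
    have h5 : (2:ℝ) ^ m ≤ 2 ^ m * ‖f^[n] z‖ := by nlinarith [pow_pos (by norm_num : (0:ℝ) < 2) m]
    rw [h2] at h1
    linarith
  -- K is closed
  have hKiter : K = ⋂ n : ℕ, (f^[n]) ⁻¹' (Metric.closedBall 0 R) := by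
    ext z
    simp only [Set.mem_iInter, Set.mem_preimage, Metric.mem_closedBall, dist_eq_norm, sub_zero]
    constructor
    · intro hz n
      simpa using hKbound z hz n
    · intro hz
      rw [hKmem]
      refine (Metric.isBounded_closedBall (x := (0:ℂ)) (r := R)).subset ?_
      rintro _ ⟨n, rfl⟩
      simpa [Metric.mem_closedBall, dist_eq_norm] using hz n
  have hfcont : Continuous f := by
    exact P.continuous_aeval
  have hKclosed : IsClosed K := by
    rw [hKiter]
    exact isClosed_iInter fun n => (Metric.isClosed_closedBall).preimage (hfcont.iterate n)
  -- K is real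
  have hKreal : ∀ z ∈ K, z.im = 0 := by
    intro z hz
    by_contra him
    set v : ℂ := (z.im : ℂ) * Complex.I with hvdef
    have hv : ‖v‖ = |z.im| := by
      rw [hvdef, norm_mul, Complex.norm_I, mul_one, Complex.norm_real, Real.norm_eq_abs]
    have hvpos : 0 < ‖v‖ := by rw [hv]; exact abs_pos.2 him
    set S : Set ℝ := {t : ℝ | 0 ≤ t ∧ z + (t : ℂ) * v ∈ K} with hSdef
    have hScl : IsClosed S := by
      have h1 : Continuous fun t : ℝ => z + (t : ℂ) * v :=
        continuous_const.add ((Complex.continuous_ofReal).mul continuous_const)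
      have h2 : S = Set.Ici (0:ℝ) ∩ (fun t : ℝ => z + (t:ℂ) * v) ⁻¹' K :=
        Set.ext fun t => Iff.rfl
      rw [h2]
      exact isClosed_Ici.inter (hKclosed.preimage h1)
    have hS0 : (0:ℝ) ∈ S := ⟨le_refl 0, by simpa using hz⟩
    have hSbdd : BddAbove S := by
      refine ⟨(‖z‖ + R) / ‖v‖, fun t ht => ?_⟩
      have hb1 : ‖z + (t:ℂ) * v‖ ≤ R := by
        have := hKbound _ ht.2 0
        simpa using this
      have hb2 : t * ‖v‖ - ‖z‖ ≤ ‖z + (t:ℂ) * v‖ := by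
        have h0 : ‖(t:ℂ) * v‖ - ‖z‖ ≤ ‖z + (t:ℂ) * v‖ := by
          have h := norm_sub_le (z + (t:ℂ)*v) z
          rw [add_sub_cancel_left] at h
          linarith
        rw [norm_mul, Complex.norm_real, Real.norm_eq_abs, abs_of_nonneg ht.1] at h0
        linarith
      rw [le_div_iff₀ hvpos]
      linarith
    set t0 := sSup S with ht0def
    have ht0 : t0 ∈ S := hScl.csSup_mem ⟨0, hS0⟩ hSbdd
    set w := z + (t0 : ℂ) * v with hwdef
    have hwK : w ∈ K := ht0.2
    have hwfr : w ∈ frontier K := by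
      rw [frontier, hKclosed.closure_eq]
      refine ⟨hwK, ?_⟩
      intro hint
      obtain ⟨ε, hε, hball⟩ := Metric.isOpen_iff.1 isOpen_interior w hint
      have hδ : (0:ℝ) < ε / (2 * ‖v‖) := div_pos hε (by positivity)
      have ht1S : t0 + ε / (2 * ‖v‖) ∈ S := by
        constructor
        · linarith [ht0.1]
        · have hdst : dist (z + ((t0 + ε / (2 * ‖v‖) : ℝ):ℂ) * v) w = ε / 2 := by
            rw [hwdef, dist_eq_norm]
            have heq : z + ((t0 + ε / (2 * ‖v‖) : ℝ):ℂ) * v - (z + (t0:ℂ) * v)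
                = ((ε / (2 * ‖v‖) : ℝ) : ℂ) * v := by
              push_cast; ring
            rw [heq, norm_mul, Complex.norm_real, Real.norm_eq_abs,
              abs_of_nonneg hδ.le]
            have hvne : ‖(z.im:ℂ) * Complex.I‖ ≠ 0 := hvpos.ne'
            field_simp [hvpos.ne']
            try ring
            try rw [mul_assoc, mul_inv_cancel₀ hvne, mul_one]
          have hm : z + ((t0 + ε / (2 * ‖v‖) : ℝ):ℂ) * v ∈ Metric.ball w ε := by
            rw [Metric.mem_ball, hdst]; linarith
          exact interior_subset (hball hm)
      have hle : t0 + ε / (2 * ‖v‖) ≤ t0 := le_csSup hSbdd ht1S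
      linarith
    have hwim : w.im = 0 := hJ w hwfr
    have : w.im = (1 + t0) * z.im := by
      rw [hwdef, hvdef]
      simp [Complex.add_im, Complex.mul_im, Complex.ofReal_re, Complex.ofReal_im,
        Complex.I_re, Complex.I_im]
      ring
    rw [this] at hwim
    have h1t : (0:ℝ) < 1 + t0 := by linarith [ht0.1]
    rcases mul_eq_zero.1 hwim with h | h
    · linarith
    · exact him h
  -- Julia set equals filled Julia set
  have hKint : interior K = ∅ := by
    by_contra hne
    obtain ⟨z, hz⟩ := Set.nonempty_iff_ne_empty.2 hne
    obtain ⟨ε, hε, hball⟩ := Metric.isOpen_iff.1 isOpen_interior z hz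
    have hz0 : z.im = 0 := hKreal z (interior_subset hz)
    have hmem : z + (ε/2 : ℝ) * Complex.I ∈ K := by
      refine interior_subset (hball ?_)
      rw [Metric.mem_ball, dist_eq_norm]
      have heq : z + ((ε/2:ℝ):ℂ) * Complex.I - z = ((ε/2:ℝ):ℂ) * Complex.I := by ring
      rw [heq, norm_mul, Complex.norm_I, mul_one, Complex.norm_real, Real.norm_eq_abs,
        abs_of_pos (by linarith)]
      linarith
    have := hKreal _ hmem
    simp [Complex.add_im, Complex.mul_im, hz0] at this
    linarith
  have hJK : juliaSet P = K := by
    rw [juliaSet, frontier, hKclosed.closure_eq, hKint, Set.diff_empty]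
  -- transfer to real points
  have hreal : ∀ x : ℝ, P.eval (x : ℂ) = ((p.eval x : ℝ) : ℂ) := by
    intro x
    rw [hPdef, Polynomial.eval_map]
    exact Polynomial.eval₂_at_apply (algebraMap ℝ ℂ) x
  have haK : (a : ℂ) ∈ K := hJK ▸ ha.1
  have hbK : (b : ℂ) ∈ K := hJK ▸ hb.1
  have hmemIcc : ∀ x : ℝ, (x : ℂ) ∈ K → a ≤ x ∧ x ≤ b := by
    intro x hx
    rw [← hJK] at hx
    exact ⟨ha.2 hx, hb.2 hx⟩
  have hab : a ≤ b := (hmemIcc a haK).2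
  have hevalK : ∀ x : ℝ, (x : ℂ) ∈ K → ((p.eval x : ℝ) : ℂ) ∈ K := by
    intro x hx
    rw [← hreal x]
    exact (hinv _).2 hx
  have hpreim : ∀ x : ℝ, ((p.eval x : ℝ) : ℂ) ∈ K → (x : ℂ) ∈ K := by
    intro x hx
    rw [← hreal x] at hx
    exact (hinv _).1 hx
  have hpa : a ≤ p.eval a ∧ p.eval a ≤ b := hmemIcc _ (hevalK a haK)
  have hpb : a ≤ p.eval b ∧ p.eval b ≤ b := hmemIcc _ (hevalK b hbK)
  have hpreim' : ∀ x : ℝ, (p.eval x = a ∨ p.eval x = b) → a ≤ x ∧ x ≤ b := by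
    intro x hx
    refine hmemIcc x (hpreim x ?_)
    rcases hx with h | h
    · rw [h]; exact haK
    · rw [h]; exact hbK
  have hpcont : Continuous fun x : ℝ => p.eval x := p.continuous_aeval
  -- there are points left of a and right of b with large values
  have hdeg : 0 < p.degree := by
    have : 0 < p.natDegree := by omega
    exact Polynomial.natDegree_pos_iff_degree_pos.1 this
  -- endpoint a
  have hA : p.eval a = a ∨ p.eval a = b := by
    set q := p.comp (-Polynomial.X) with hq
    have hqdeg : 0 < q.degree := by
      have h1 : q.natDegree = p.natDegree := by
        rw [hq, Polynomial.natDegree_comp]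
        simp
      refine Polynomial.natDegree_pos_iff_degree_pos.1 ?_
      rw [h1]; omega
    have htend := Polynomial.abs_tendsto_atTop q hqdeg
    obtain ⟨y, hy1, hy2⟩ : ∃ y : ℝ, -a < y ∧ max |a| |b| < |q.eval y| := by
      have h1 := htend.eventually_gt_atTop (max |a| |b|)
      have h2 := eventually_gt_atTop (-a)
      obtain ⟨y, hy⟩ := (h2.and h1).exists
      exact ⟨y, hy.1, hy.2⟩
    set x0 := -y with hx0
    have hx0a : x0 < a := by rw [hx0]; linarith
    have hqev : q.eval y = p.eval x0 := by
      rw [hq, Polynomial.eval_comp]; simp [hx0]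
    rw [hqev] at hy2
    have hout : p.eval x0 < a ∨ b < p.eval x0 := by
      by_contra hcon
      push_neg at hcon
      have h1 : |p.eval x0| ≤ max |a| |b| := by
        rcases le_or_gt 0 (p.eval x0) with h | h
        · refine le_max_of_le_right ?_
          rw [abs_of_nonneg h]
          exact le_trans hcon.2 (le_abs_self b)
        · refine le_max_of_le_left ?_
          rw [abs_of_neg h]
          have := hcon.1
          have : -p.eval x0 ≤ -a := by linarith
          exact le_trans this (neg_le_abs a)
      linarith
    rcases hout with hout | hout
    · -- p(x0) < a ≤ p(a) : IVT gives c with p(c) = a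
      have hiv : a ∈ Set.Icc (p.eval x0) (p.eval a) := ⟨hout.le, hpa.1⟩
      obtain ⟨c, hc1, hc2⟩ := intermediate_value_Icc hx0a.le (hpcont.continuousOn) hiv
      have hca : a ≤ c := (hpreim' c (Or.inl hc2)).1
      have : c = a := le_antisymm hc1.2 hca
      rw [this] at hc2
      exact Or.inl hc2
    · -- p(a) ≤ b < p(x0) : IVT gives c with p(c) = b
      have hiv : b ∈ Set.Icc (p.eval a) (p.eval x0) := ⟨hpa.2, hout.le⟩
      obtain ⟨c, hc1, hc2⟩ := intermediate_value_Icc' hx0a.le (hpcont.continuousOn) hiv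
      have hca : a ≤ c := (hpreim' c (Or.inr hc2)).1
      have : c = a := le_antisymm hc1.2 hca
      rw [this] at hc2
      exact Or.inr hc2
  -- endpoint b
  have hB : p.eval b = a ∨ p.eval b = b := by
    have htend := Polynomial.abs_tendsto_atTop p hdeg
    obtain ⟨x1, hx1b, hx1big⟩ : ∃ x1 : ℝ, b < x1 ∧ max |a| |b| < |p.eval x1| := by
      have h1 := htend.eventually_gt_atTop (max |a| |b|)
      have h2 := eventually_gt_atTop b
      obtain ⟨y, hy⟩ := (h2.and h1).exists
      exact ⟨y, hy.1, hy.2⟩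
    have hout : p.eval x1 < a ∨ b < p.eval x1 := by
      by_contra hcon
      push_neg at hcon
      have h1 : |p.eval x1| ≤ max |a| |b| := by
        rcases le_or_gt 0 (p.eval x1) with h | h
        · refine le_max_of_le_right ?_
          rw [abs_of_nonneg h]
          exact le_trans hcon.2 (le_abs_self b)
        · refine le_max_of_le_left ?_
          rw [abs_of_neg h]
          have : -p.eval x1 ≤ -a := by linarith [hcon.1]
          exact le_trans this (neg_le_abs a)
      linarith
    rcases hout with hout | hout
    · have hiv : a ∈ Set.Icc (p.eval x1) (p.eval b) := ⟨hout.le, hpb.1⟩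
      obtain ⟨c, hc1, hc2⟩ := intermediate_value_Icc' hx1b.le (hpcont.continuousOn) hiv
      have hcb : c ≤ b := (hpreim' c (Or.inl hc2)).2
      have : c = b := le_antisymm hcb hc1.1
      rw [this] at hc2
      exact Or.inl hc2
    · have hiv : b ∈ Set.Icc (p.eval b) (p.eval x1) := ⟨hpb.2, hout.le⟩
      obtain ⟨c, hc1, hc2⟩ := intermediate_value_Icc hx1b.le (hpcont.continuousOn) hiv
      have hcb : c ≤ b := (hpreim' c (Or.inr hc2)).2
      have : c = b := le_antisymm hcb hc1.1
      rw [this] at hc2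
      exact Or.inr hc2
  refine ⟨⟨?_, ?_⟩, ?_⟩
  · rcases hA with h | h
    · exact Or.inl h
    · exact Or.inr h
  · rcases hB with h | h
    · exact Or.inl h
    · exact Or.inr h
  · rcases hA with hA | hA
    · exact Or.inl (Or.inl hA)
    · rcases hB with hB | hB
      · exact Or.inr ⟨hA, hB⟩
      · exact Or.inl (Or.inr hB)
end

section
/- Let f be holomorphic on the open right half-plane and suppose |f(z)| ≥ 1 for all z with Re z > 0. Then for every ε ∈ (0, π/2) there exist positive constants A, B such that |f(z)| ≤ B·exp(A|z|) for all z with |arg z| ≤ π/2 − ε and |z| ≥ 1. -/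
open Real Metric Filter Finset

/-- Existence of a primitive for a holomorphic function on a closed ball. -/
lemma exists_primitive {Φ : ℂ → ℂ} {r : NNReal} (hr : 0 < r)
    (hΦ : DifferentiableOn ℂ Φ (Metric.closedBall 0 r)) :
    ∃ g : ℂ → ℂ, ∀ w ∈ Metric.ball (0:ℂ) r, HasDerivAt g (Φ w) w := by
  have hs := hΦ.hasFPowerSeriesOnBall hr
  set p := cauchyPowerSeries Φ 0 r with hp
  have hcoeff : ∀ k, ‖p.coeff k‖ ≤ ‖p k‖ := by
    intro k
    have h := (p k).le_opNorm (fun _ => (1:ℂ))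
    simp only [norm_one, Finset.prod_const, one_pow, mul_one] at h
    exact h
  have hdivle : ∀ k : ℕ, ‖p.coeff k / ((k:ℂ)+1)‖ ≤ ‖p k‖ := by
    intro k
    rw [norm_div]
    have hk1 : (1:ℝ) ≤ ‖((k:ℂ)+1)‖ := by
      have h2 : ((k:ℂ)+1) = ((k+1 : ℕ) : ℂ) := by push_cast; ring
      rw [h2, Complex.norm_natCast]
      exact_mod_cast Nat.one_le_iff_ne_zero.mpr (Nat.succ_ne_zero k)
    refine (div_le_iff₀ (by linarith)).mpr ?_
    calc ‖p.coeff k‖ ≤ ‖p k‖ := hcoeff k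
      _ ≤ ‖p k‖ * ‖((k:ℂ)+1)‖ := le_mul_of_one_le_right (norm_nonneg _) hk1
  -- summability of the primitive series inside the ball
  have hsum : ∀ w ∈ Metric.ball (0:ℂ) r,
      Summable (fun k => p.coeff k / ((k:ℂ)+1) * w^(k+1)) := by
    intro w hw
    have hwr : (‖w‖₊ : ENNReal) < p.radius := by
      refine lt_of_lt_of_le ?_ hs.r_le
      have h3 := Metric.mem_ball.mp hw
      simp only [dist_zero_right] at h3
      exact_mod_cast ENNReal.coe_lt_coe.mpr (by exact_mod_cast h3)
    have S : Summable (fun n => ‖p n‖ * (‖w‖₊ : ℝ) ^ n) := p.summable_norm_mul_pow hwr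
    have S2 : Summable (fun n => ‖p n‖ * ‖w‖ ^ n * ‖w‖) := by
      have : (fun n => ‖p n‖ * (‖w‖₊ : ℝ) ^ n) = fun n => ‖p n‖ * ‖w‖ ^ n := rfl
      rw [this] at S
      exact S.mul_right _
    refine Summable.of_norm (S2.of_nonneg_of_le (fun k => norm_nonneg _) ?_)
    intro k
    rw [norm_mul, norm_pow, pow_succ]
    have h4 : ‖p.coeff k / ((k:ℂ)+1)‖ * (‖w‖^k * ‖w‖) ≤ ‖p k‖ * (‖w‖^k * ‖w‖) := by
      gcongr
      exact hdivle k
    calc ‖p.coeff k / ((k:ℂ)+1)‖ * (‖w‖^k * ‖w‖) ≤ ‖p k‖ * (‖w‖^k * ‖w‖) := h4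
      _ = ‖p k‖ * ‖w‖^k * ‖w‖ := by ring
  -- the primitive
  refine ⟨fun w => ∑' k, p.coeff k / ((k:ℂ)+1) * w^(k+1), ?_⟩
  intro w hw
  have hTLU' : TendstoLocallyUniformlyOn
      (fun (n:ℕ) (w:ℂ) => ∑ k ∈ Finset.range n, p.coeff k * w^k) Φ atTop (Metric.ball 0 r) := by
    have hTLU := hs.tendstoLocallyUniformlyOn
    have hball : Metric.eball (0:ℂ) r = Metric.ball (0:ℂ) r := by
      simp [Metric.eball_coe]
    rw [hball] at hTLU
    have h0 : (fun y : ℂ => Φ ((0:ℂ) + y)) = Φ := by funext y; simp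
    have h1 : (fun (n : ℕ) (y : ℂ) => p.partialSum n y)
        = fun n y => ∑ k ∈ Finset.range n, p.coeff k * y^k := by
      funext n y
      unfold FormalMultilinearSeries.partialSum
      refine Finset.sum_congr rfl (fun k _ => ?_)
      rw [p.apply_eq_pow_smul_coeff]
      simp [mul_comm]
    rw [h0, h1] at hTLU
    exact hTLU
  have hderiv : ∀ᶠ (n:ℕ) in atTop, ∀ x ∈ Metric.ball (0:ℂ) r,
      HasDerivAt (fun w => ∑ k ∈ Finset.range n, p.coeff k / ((k:ℂ)+1) * w^(k+1))
        (∑ k ∈ Finset.range n, p.coeff k * x^k) x := by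
    refine Filter.Eventually.of_forall (fun n x hx => ?_)
    refine HasDerivAt.fun_sum (fun k _ => ?_)
    have h1 : HasDerivAt (fun w : ℂ => w^(k+1)) (((k:ℂ)+1) * x^k) x := by
      simpa using hasDerivAt_pow (k+1) x
    have h2 := h1.const_mul (p.coeff k / ((k:ℂ)+1))
    have hk0 : ((k:ℂ)+1) ≠ 0 := Nat.cast_add_one_ne_zero k
    rw [← mul_assoc, div_mul_cancel₀ _ hk0] at h2
    exact h2
  have hpt : ∀ x ∈ Metric.ball (0:ℂ) r,
      Filter.Tendsto (fun n => ∑ k ∈ Finset.range n, p.coeff k / ((k:ℂ)+1) * x^(k+1)) atTop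
        (nhds (∑' k, p.coeff k / ((k:ℂ)+1) * x^(k+1))) := by
    intro x hx
    exact ((hsum x hx).hasSum).tendsto_sum_nat
  exact hasDerivAt_of_tendstoLocallyUniformlyOn isOpen_ball hTLU' hderiv hpt hw

set_option maxHeartbeats 1000000 in
lemma halfplane_bound (f : ℂ → ℂ) (hf : DifferentiableOn ℂ f {z : ℂ | 0 < z.re})
    (hlb : ∀ z : ℂ, 0 < z.re → 1 ≤ ‖f z‖) :
    ∃ C : ℝ, 0 < C ∧ ∀ z : ℂ, 0 < z.re →
      ‖f z‖ ≤ Real.exp (C * (‖z‖ + 1)^2 / z.re) := by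
  set φ : ℂ → ℂ := fun w => (1+w)/(1-w) with hφ
  set F : ℂ → ℂ := fun w => f (φ w) with hF
  have hden : ∀ w ∈ Metric.ball (0:ℂ) 1, (1:ℂ) - w ≠ 0 := by
    intro w hw h
    rw [sub_eq_zero] at h
    rw [mem_ball, dist_zero_right, ← h] at hw
    simp at hw
  have hφre : ∀ w ∈ Metric.ball (0:ℂ) 1, 0 < (φ w).re := by
    intro w hw
    have h1 : Complex.normSq w < 1 := by
      rw [← Complex.sq_norm]
      have h0 := mem_ball_zero_iff.mp hw
      nlinarith [norm_nonneg w]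
    have h2 : 0 < Complex.normSq (1-w) := Complex.normSq_pos.mpr (hden w hw)
    have h3 : (φ w).re = (1 - Complex.normSq w) / Complex.normSq (1-w) := by
      rw [hφ]
      simp only [Complex.div_re]
      rw [Complex.normSq_apply, Complex.normSq_apply]
      simp only [Complex.add_re, Complex.add_im, Complex.sub_re, Complex.sub_im,
        Complex.one_re, Complex.one_im]
      field_simp
      ring
    rw [h3]
    exact div_pos (by linarith) h2
  have hmaps : Set.MapsTo φ (Metric.ball (0:ℂ) 1) {z : ℂ | 0 < z.re} := fun w hw => hφre w hw
  have hφdiff : DifferentiableOn ℂ φ (Metric.ball (0:ℂ) 1) := by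
    apply DifferentiableOn.div
    · exact (differentiable_const _).add differentiable_id |>.differentiableOn
    · exact (differentiable_const _).sub differentiable_id |>.differentiableOn
    · exact hden
  have hFdiff : DifferentiableOn ℂ F (Metric.ball (0:ℂ) 1) := hf.comp hφdiff hmaps
  have hFlb : ∀ w ∈ Metric.ball (0:ℂ) 1, 1 ≤ ‖F w‖ := fun w hw =>
    hlb _ (hφre w hw)
  have hFne : ∀ w ∈ Metric.ball (0:ℂ) 1, F w ≠ 0 := by
    intro w hw h
    have h5 := hFlb w hw
    rw [h] at h5; simp only [norm_zero] at h5; linarith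
  have hΦdiff : DifferentiableOn ℂ (fun w => deriv F w / F w) (Metric.ball (0:ℂ) 1) := by
    apply DifferentiableOn.div
    · exact ((hFdiff.analyticOnNhd isOpen_ball).deriv).differentiableOn
    · exact hFdiff
    · exact hFne
  -- the constant
  have hf1 : (1:ℂ) ∈ {z : ℂ | 0 < z.re} := by simp
  have hf1ne : f 1 ≠ 0 := by
    intro h
    have h5 := hlb 1 (by simp)
    rw [h] at h5; simp only [norm_zero] at h5; linarith
  set a : ℂ := Complex.log (f 1) + 1 with ha
  have hare : 1 ≤ a.re := by
    rw [ha, Complex.add_re, Complex.log_re, Complex.one_re]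
    have := Real.log_nonneg (hlb 1 (by simp))
    linarith
  have haabs : 1 ≤ ‖a‖ := le_trans hare (Complex.re_le_norm a)
  refine ⟨2 * ‖a‖ + 1, by positivity, ?_⟩
  intro z hz
  -- the Cayley image of z
  have hz1ne : z + 1 ≠ 0 := by
    intro h
    have : (z+1).re = 0 := by rw [h]; simp
    simp only [Complex.add_re, Complex.one_re] at this
    linarith
  set w : ℂ := (z-1)/(z+1) with hw
  have habslt : ‖z-1‖ < ‖z+1‖ := by
    have h1 : Complex.normSq (z-1) < Complex.normSq (z+1) := by
      rw [Complex.normSq_apply, Complex.normSq_apply]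
      simp only [Complex.sub_re, Complex.sub_im, Complex.add_re, Complex.add_im,
        Complex.one_re, Complex.one_im]
      nlinarith
    have h2 := Complex.sq_norm (z-1)
    have h3 := Complex.sq_norm (z+1)
    nlinarith [norm_nonneg (z-1), norm_nonneg (z+1)]
  have hwabs : ‖w‖ = ‖z-1‖ / ‖z+1‖ := by
    rw [hw, norm_div]
  have hwlt1 : ‖w‖ < 1 := by
    rw [hwabs]
    rw [div_lt_one (lt_of_le_of_lt (norm_nonneg _) habslt)]
    exact habslt
  have hwball : w ∈ Metric.ball (0:ℂ) 1 := by
    rw [mem_ball_zero_iff]; exact hwlt1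
  have hφw : φ w = z := by
    rw [hφ, hw]
    field_simp
    ring
  -- choose the radius
  set rr : ℝ := (1 + ‖w‖)/2 with hrr
  have hrr0 : 0 ≤ rr := by positivity
  set r : NNReal := ⟨rr, hrr0⟩ with hr
  have hrpos : 0 < r := by
    rw [← NNReal.coe_lt_coe, show (r:ℝ) = (1 + ‖w‖)/2 from rfl]
    simp only [NNReal.coe_zero, NNReal.coe_mk]
    positivity
  have hrlt1 : (r:ℝ) < 1 := by
    rw [show (r:ℝ) = (1 + ‖w‖)/2 from rfl]
    linarith
  have hwr : ‖w‖ < (r:ℝ) := by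
    rw [show (r:ℝ) = (1 + ‖w‖)/2 from rfl]
    linarith
  have hsub : Metric.closedBall (0:ℂ) r ⊆ Metric.ball (0:ℂ) 1 := by
    intro u hu
    rw [mem_closedBall, dist_zero_right] at hu
    rw [mem_ball, dist_zero_right]
    exact lt_of_le_of_lt hu hrlt1
  have hsub' : Metric.ball (0:ℂ) r ⊆ Metric.ball (0:ℂ) 1 :=
    le_trans ball_subset_closedBall hsub
  obtain ⟨g₀, hg₀⟩ := exists_primitive hrpos (hΦdiff.mono hsub)
  -- F u * exp (-g₀ u) is constant on ball 0 r
  have hconst : ∀ u ∈ Metric.ball (0:ℂ) r,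
      F u * Complex.exp (-g₀ u) = F 0 * Complex.exp (-g₀ 0) := by
    intro u hu
    have h0mem : (0:ℂ) ∈ Metric.ball (0:ℂ) r := by
      rw [mem_ball, dist_self]; exact_mod_cast hrpos
    have hder : ∀ x ∈ Metric.ball (0:ℂ) r,
        HasDerivWithinAt (fun u => F u * Complex.exp (-g₀ u)) 0 (Metric.ball (0:ℂ) r) x := by
      intro x hx
      have hFd : HasDerivAt F (deriv F x) x :=
        (hFdiff.differentiableAt (isOpen_ball.mem_nhds (hsub' hx))).hasDerivAt
      have hgd := hg₀ x hx
      have hexp : HasDerivAt (fun u => Complex.exp (-g₀ u))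
          (Complex.exp (-g₀ x) * (-(deriv F x / F x))) x := ((hgd.neg).cexp)
      have := hFd.mul hexp
      have hne := hFne x (hsub' hx)
      have heq : deriv F x * Complex.exp (-g₀ x) +
          F x * (Complex.exp (-g₀ x) * -(deriv F x / F x)) = 0 := by
        field_simp
        ring
      rw [heq] at this
      exact this.hasDerivWithinAt
    have h6 := Convex.norm_image_sub_le_of_norm_hasDerivWithin_le (C := 0) hder
      (fun x _ => by simp) (convex_ball 0 r) h0mem hu
    rw [zero_mul] at h6
    exact sub_eq_zero.mp (norm_le_zero_iff.mp h6)
  set g : ℂ → ℂ := fun u => g₀ u - g₀ 0 + Complex.log (f 1) with hg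
  have hF0 : F 0 = f 1 := by
    rw [hF, hφ]; norm_num
  have hexpg : ∀ u ∈ Metric.ball (0:ℂ) r, Complex.exp (g u) = F u := by
    intro u hu
    have h1 := hconst u hu
    rw [hF0, Complex.exp_neg, Complex.exp_neg] at h1
    have he1 : Complex.exp (g₀ u) ≠ 0 := Complex.exp_ne_zero _
    have he2 : Complex.exp (g₀ 0) ≠ 0 := Complex.exp_ne_zero _
    field_simp at h1
    rw [hg]
    rw [Complex.exp_add, Complex.exp_sub, Complex.exp_log hf1ne]
    rw [div_mul_eq_mul_div, div_eq_iff he2]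
    linear_combination -h1
  have hgre : ∀ u ∈ Metric.ball (0:ℂ) r, 0 ≤ (g u).re := by
    intro u hu
    have h1 : Real.exp ((g u).re) = ‖F u‖ := by
      rw [← Complex.norm_exp, hexpg u hu]
    have h2 := hFlb u (hsub' hu)
    rw [← h1] at h2
    exact le_of_not_gt (fun h => by
      have := Real.exp_lt_one_iff.mpr h
      linarith)
  have hg0 : g 0 = Complex.log (f 1) := by rw [hg]; simp
  -- Schwarz--Pick
  set F₂ : ℂ → ℂ := fun u => (g u + 1 - a)/(g u + 1 + (starRingEnd ℂ) a) with hF₂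
  have hkey : ∀ u ∈ Metric.ball (0:ℂ) r,
      ‖g u + 1 - a‖ < ‖g u + 1 + (starRingEnd ℂ) a‖ := by
    intro u hu
    have hx := hgre u hu
    have h1 : Complex.normSq (g u + 1 - a) < Complex.normSq (g u + 1 + (starRingEnd ℂ) a) := by
      rw [Complex.normSq_apply, Complex.normSq_apply]
      simp only [Complex.add_re, Complex.add_im, Complex.sub_re, Complex.sub_im,
        Complex.one_re, Complex.one_im, Complex.conj_re, Complex.conj_im]
      nlinarith [hx, hare]
    have h2 := Complex.sq_norm (g u + 1 - a)
    have h3 := Complex.sq_norm (g u + 1 + (starRingEnd ℂ) a)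
    nlinarith [norm_nonneg (g u + 1 - a), norm_nonneg (g u + 1 + (starRingEnd ℂ) a)]
  have hdenne : ∀ u ∈ Metric.ball (0:ℂ) r, g u + 1 + (starRingEnd ℂ) a ≠ 0 := by
    intro u hu h
    have h7 := hkey u hu
    rw [h, norm_zero] at h7
    exact (norm_nonneg _).not_gt h7
  have hgdiff : DifferentiableOn ℂ g (Metric.ball (0:ℂ) r) := by
    intro u hu
    exact (((hg₀ u hu).differentiableAt.sub_const (g₀ 0)).add_const
      (Complex.log (f 1))).differentiableWithinAt
  have hF₂diff : DifferentiableOn ℂ F₂ (Metric.ball (0:ℂ) r) := by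
    apply DifferentiableOn.div
    · exact (hgdiff.add_const 1).sub_const a
    · exact (hgdiff.add_const 1).add_const _
    · exact hdenne
  have hnum0 : g 0 + 1 - a = 0 := by rw [hg0, ha]; ring
  have hF₂0 : F₂ 0 = 0 := by
    rw [hF₂]
    simp only [hnum0, zero_div]
  have hF₂maps : Set.MapsTo F₂ (Metric.ball (0:ℂ) r) (Metric.ball (F₂ 0) 1) := by
    intro u hu
    rw [hF₂0, mem_ball_zero_iff, hF₂]
    rw [norm_div]
    have hd0 : 0 < ‖g u + 1 + (starRingEnd ℂ) a‖ :=
      lt_of_le_of_lt (norm_nonneg _) (hkey u hu)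
    rw [div_lt_one hd0]
    exact hkey u hu
  have hwballr : w ∈ Metric.ball (0:ℂ) r := by
    rw [mem_ball_zero_iff]; exact hwr
  have hschwarz := Complex.dist_le_div_mul_dist_of_mapsTo_ball hF₂diff (hF₂maps.mono_right ball_subset_closedBall) hwballr
  rw [hF₂0, dist_zero_right, dist_zero_right] at hschwarz
  -- notation for the real quantities
  set s : ℝ := ‖w‖ with hs
  have hs0 : 0 ≤ s := norm_nonneg w
  have hs1 : s < 1 := hwlt1
  have hrval : (r:ℝ) = (1+s)/2 := rfl
  set A1 : ℝ := ‖g w + 1‖ with hA1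
  set Aa : ℝ := ‖a‖ with hAa
  have hA1n : 0 ≤ A1 := norm_nonneg _
  have hAan : 0 ≤ Aa := norm_nonneg _
  have hdpos : 0 < ‖g w + 1 + (starRingEnd ℂ) a‖ :=
    lt_of_le_of_lt (norm_nonneg _) (hkey w hwballr)
  have h8 : ‖g w + 1 - a‖ ≤ (s / r) * ‖g w + 1 + (starRingEnd ℂ) a‖ := by
    have hF2w : ‖F₂ w‖ ≤ 1 / r * s := hschwarz
    have heq2 : ‖g w + 1 - a‖
        = ‖F₂ w‖ * ‖g w + 1 + (starRingEnd ℂ) a‖ := by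
      rw [hF₂, norm_div, div_mul_cancel₀ _ hdpos.ne']
    rw [heq2]
    calc ‖F₂ w‖ * ‖g w + 1 + (starRingEnd ℂ) a‖
        ≤ (1 / r * s) * ‖g w + 1 + (starRingEnd ℂ) a‖ :=
          mul_le_mul_of_nonneg_right hF2w hdpos.le
      _ = (s / r) * ‖g w + 1 + (starRingEnd ℂ) a‖ := by ring
  have h9 : ‖g w + 1 + (starRingEnd ℂ) a‖ ≤ A1 + Aa := by
    calc ‖g w + 1 + (starRingEnd ℂ) a‖
        ≤ ‖g w + 1‖ + ‖(starRingEnd ℂ) a‖ := norm_add_le _ _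
      _ = A1 + Aa := by rw [Complex.norm_conj]
  have h10 : A1 ≤ ‖g w + 1 - a‖ + Aa := by
    calc A1 = ‖(g w + 1 - a) + a‖ := by rw [hA1]; congr 1; ring
      _ ≤ ‖g w + 1 - a‖ + Aa := norm_add_le _ _
  have hrpos' : (0:ℝ) < (r:ℝ) := by rw [hrval]; linarith
  have hineq : A1 ≤ (s / r) * (A1 + Aa) + Aa := by
    have hsr : 0 ≤ s / (r:ℝ) := div_nonneg hs0 hrpos'.le
    calc A1 ≤ ‖g w + 1 - a‖ + Aa := h10
      _ ≤ (s / r) * ‖g w + 1 + (starRingEnd ℂ) a‖ + Aa := by linarith [h8]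
      _ ≤ (s / r) * (A1 + Aa) + Aa := by
          have := mul_le_mul_of_nonneg_left h9 hsr
          linarith
  -- A1 * (1 - s) ≤ 4 * Aa
  have hA1s : A1 * (1 - s) ≤ 4 * Aa := by
    have h11 : A1 * (r:ℝ) ≤ s * (A1 + Aa) + Aa * r := by
      have := mul_le_mul_of_nonneg_right hineq hrpos'.le
      calc A1 * (r:ℝ) ≤ ((s / r) * (A1 + Aa) + Aa) * r := this
        _ = s * (A1 + Aa) + Aa * r := by field_simp
    rw [hrval] at h11
    nlinarith
  -- lower bound for 1 - s in terms of z
  set m : ℝ := ‖z‖ with hm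
  have hm0 : 0 ≤ m := norm_nonneg z
  have h1w : 2 * z.re ≤ (1 - s) * (m + 1)^2 := by
    set p : ℝ := ‖z+1‖ with hp
    set q : ℝ := ‖z-1‖ with hq
    have hq0 : 0 ≤ q := norm_nonneg _
    have hppos : 0 < p := lt_of_le_of_lt hq0 habslt
    have hpq : p^2 - q^2 = 4 * z.re := by
      rw [hp, hq, Complex.sq_norm, Complex.sq_norm, Complex.normSq_apply, Complex.normSq_apply]
      simp only [Complex.add_re, Complex.add_im, Complex.sub_re, Complex.sub_im,
        Complex.one_re, Complex.one_im]
      ring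
    have hple : p ≤ m + 1 := by
      calc p ≤ ‖z‖ + ‖1‖ := norm_add_le z 1
        _ = m + 1 := by rw [norm_one]
    have hqle : q ≤ m + 1 := by
      have h := norm_sub_le z (1:ℂ)
      rw [hq, hm]
      simpa using h
    have hseq : s = q / p := hwabs
    have hqp : q < p := habslt
    have hkey2 : 2 * z.re * p ≤ (p - q) * (m + 1)^2 := by
      have h16 : p * (p + q) ≤ (m+1) * (2*(m+1)) :=
        mul_le_mul hple (by linarith) (by linarith) (by linarith)
      have h17 : (p - q) * (p * (p + q)) = 4 * z.re * p := by linear_combination p * hpq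
      have h18 := mul_le_mul_of_nonneg_left h16 (sub_nonneg.mpr hqp.le)
      nlinarith [h17, h18]
    rw [hseq]
    have h12 : 1 - q / p = (p - q) / p := by field_simp
    rw [h12]
    rw [div_mul_eq_mul_div, le_div_iff₀ hppos]
    linarith [hkey2]
  -- conclude
  have hregw : (g w).re ≤ A1 := by
    have h13 : (g w + 1).re ≤ A1 := Complex.re_le_norm _
    simp only [Complex.add_re, Complex.one_re] at h13
    linarith
  have hfinal : (g w).re ≤ (2 * Aa + 1) * (m + 1)^2 / z.re := by
    rw [le_div_iff₀ hz]
    have h14 := mul_le_mul_of_nonneg_left h1w hA1n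
    have h15 := mul_le_mul_of_nonneg_right hA1s (sq_nonneg (m+1))
    nlinarith [mul_le_mul_of_nonneg_right hregw hz.le, sq_nonneg (m+1), mul_nonneg hAan (sq_nonneg (m+1))]
  have hfz : ‖f z‖ = Real.exp ((g w).re) := by
    rw [← hφw]
    have : f (φ w) = F w := rfl
    rw [this, ← hexpg w hwballr, Complex.norm_exp]
  rw [hfz]
  exact Real.exp_le_exp.mpr hfinal


/-- A holomorphic function on the right half-plane with `|f| ≥ 1` has at most
exponential growth of order one in every smaller sector `|arg z| ≤ π/2 - ε`. -/
theorem stmt_10 (f : ℂ → ℂ) (hf : DifferentiableOn ℂ f {z : ℂ | 0 < z.re})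
    (hlb : ∀ z : ℂ, 0 < z.re → 1 ≤ ‖f z‖) :
    ∀ ε : ℝ, 0 < ε → ε < π / 2 → ∃ A B : ℝ, 0 < A ∧ 0 < B ∧
      ∀ z : ℂ, |Complex.arg z| ≤ π / 2 - ε → 1 ≤ ‖z‖ →
        ‖f z‖ ≤ B * Real.exp (A * ‖z‖) := by
  intro ε hε hε2
  obtain ⟨C, hC, hbound⟩ := halfplane_bound f hf hlb
  have hsin : 0 < Real.sin ε := Real.sin_pos_of_pos_of_lt_pi hε (by linarith [Real.pi_gt_three])
  refine ⟨4*C/Real.sin ε, 1, by positivity, one_pos, ?_⟩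
  intro z harg habs
  have hzne : z ≠ 0 := by
    intro h; rw [h] at habs; simp at habs; linarith
  have hcos := Complex.cos_arg hzne
  have habspos : (0:ℝ) < ‖z‖ := lt_of_lt_of_le one_pos habs
  have hargle : Real.cos (π/2 - ε) ≤ Real.cos (Complex.arg z) := by
    rw [← Real.cos_abs (Complex.arg z)]
    exact Real.cos_le_cos_of_nonneg_of_le_pi (abs_nonneg _)
      (by linarith [Real.pi_pos]) harg
  rw [Real.cos_pi_div_two_sub] at hargle
  have hre : Real.sin ε * ‖z‖ ≤ z.re := by
    have h0 : z.re = Real.cos (Complex.arg z) * ‖z‖ := by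
      rw [hcos]; field_simp
    rw [h0]
    exact mul_le_mul_of_nonneg_right hargle habspos.le
  have hzre : 0 < z.re := lt_of_lt_of_le (by positivity) hre
  have h1 := hbound z hzre
  rw [one_mul]
  refine le_trans h1 (Real.exp_le_exp.mpr ?_)
  set m := ‖z‖ with hm
  have h2 : C * (m+1)^2 ≤ C * (4*(m*m)) := by
    apply mul_le_mul_of_nonneg_left _ hC.le
    nlinarith
  calc C*(m+1)^2/z.re ≤ C*(4*(m*m))/(Real.sin ε * m) :=
        div_le_div₀ (by positivity) h2 (by positivity) hre
    _ = 4*C/Real.sin ε * m := by field_simp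
end

section
/- Let f be holomorphic on the sector W = {z ≠ 0 : α < arg z < β} and suppose there is M > 0 with |f(z)| ≥ M on W. Then for every ε > 0 there exist A, B > 0 such that |f(z)| ≤ B·exp(A|z|^κ) for all z with α + ε < arg z < β − ε and |z| ≥ 1, where κ = π/(β − α). -/
open Real

/-- The open sector `{z ≠ 0 : α < arg z < β}` (arguments measured continuously). -/
def sector (α β : ℝ) : Set ℂ :=
  {z | ∃ r θ : ℝ, 0 < r ∧ α < θ ∧ θ < β ∧ z = (r : ℂ) * Complex.exp ((θ : ℂ) * Complex.I)}

open MeasureTheory Metric Set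

lemma primitive_ball {q : ℂ → ℂ} (hq : DifferentiableOn ℂ q (ball (0:ℂ) 1)) :
    ∃ h : ℂ → ℂ, ∀ z ∈ ball (0:ℂ) 1, HasDerivAt h (q z) z := by
  have hopen : IsOpen (ball (0:ℂ) 1) := isOpen_ball
  have hqa : AnalyticOnNhd ℂ q (ball (0:ℂ) 1) := hq.analyticOnNhd hopen
  have hq' : AnalyticOnNhd ℂ (deriv q) (ball (0:ℂ) 1) := hqa.deriv
  have hqc : ContinuousOn q (ball (0:ℂ) 1) := hq.continuousOn
  have hq'c : ContinuousOn (deriv q) (ball (0:ℂ) 1) := hq'.continuousOn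
  set μ : Measure ℝ := volume.restrict (Set.Ioc (0:ℝ) 1) with hμ
  refine ⟨fun z => z * ∫ t, q ((t:ℂ) * z) ∂μ, ?_⟩
  intro z₀ hz₀
  rw [mem_ball_zero_iff] at hz₀
  set δ : ℝ := (1 - ‖z₀‖) / 2 with hδdef
  have hδ : 0 < δ := by rw [hδdef]; linarith
  set r : ℝ := ‖z₀‖ + δ with hrdef
  have hr1 : r < 1 := by rw [hrdef, hδdef]; linarith
  have hr0 : 0 < r := by positivity
  have hrsub : closedBall (0:ℂ) r ⊆ ball (0:ℂ) 1 := by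
    intro x hx
    rw [mem_closedBall_zero_iff] at hx
    rw [mem_ball_zero_iff]
    linarith
  have habs : ∀ (t : ℝ), t ∈ Set.Icc (0:ℝ) 1 → ∀ (x : ℂ), ‖(t:ℂ) * x‖ ≤ ‖x‖ := by
    intro t ht x
    rw [norm_mul, Complex.norm_real, Real.norm_eq_abs]
    calc |t| * ‖x‖ ≤ 1 * ‖x‖ := by
          apply mul_le_mul _ le_rfl (norm_nonneg _) zero_le_one
          rw [abs_le]; exact ⟨by linarith [ht.1], ht.2⟩
      _ = ‖x‖ := one_mul _
  have hballr : ∀ x ∈ ball z₀ δ, ‖x‖ ≤ r := by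
    intro x hx
    rw [mem_ball, dist_eq_norm] at hx
    calc ‖x‖ = ‖z₀ + (x - z₀)‖ := by ring_nf
      _ ≤ ‖z₀‖ + ‖x - z₀‖ := norm_add_le _ _
      _ ≤ r := by rw [hrdef]; linarith
  have hmem : ∀ (t : ℝ), t ∈ Set.Icc (0:ℝ) 1 → ∀ x ∈ ball z₀ δ,
      (t:ℂ) * x ∈ closedBall (0:ℂ) r := by
    intro t ht x hx
    rw [mem_closedBall_zero_iff]
    exact (habs t ht x).trans (hballr x hx)
  obtain ⟨C, hC⟩ : ∃ C, ∀ x ∈ closedBall (0:ℂ) r, ‖deriv q x‖ ≤ C :=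
    (isCompact_closedBall _ _).exists_bound_of_continuousOn (hq'c.mono hrsub)
  have hC0 : 0 ≤ C := le_trans (norm_nonneg _) (hC 0 (by simp [hr0.le]))
  have hcont : ∀ x : ℂ, ‖x‖ < 1 → ContinuousOn (fun t : ℝ => q ((t:ℂ) * x)) (Set.Icc 0 1) := by
    intro x hx
    apply hqc.comp (by fun_prop)
    intro t ht
    rw [mem_ball_zero_iff]
    exact lt_of_le_of_lt (habs t ht x) hx
  have hz₀r : ‖z₀‖ ≤ r := by rw [hrdef]; linarith
  have hcont' : ContinuousOn (fun t : ℝ => deriv q ((t:ℂ) * z₀) * (t:ℂ)) (Set.Icc 0 1) := by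
    apply ContinuousOn.mul _ (by fun_prop)
    apply (hq'c.mono hrsub).comp (by fun_prop)
    intro t ht
    exact hmem t ht z₀ (mem_ball_self hδ)
  have key := hasDerivAt_integral_of_dominated_loc_of_deriv_le (μ := μ)
      (F := fun x t => q ((t:ℂ) * x)) (F' := fun x t => deriv q ((t:ℂ) * x) * (t:ℂ))
      (x₀ := z₀) (bound := fun _ => C) (Metric.ball_mem_nhds z₀ hδ) ?_ ?_ ?_ ?_ ?_ ?_
  · have hD : HasDerivAt (fun z : ℂ => z * ∫ t, q ((t:ℂ) * z) ∂μ)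
        (1 * (∫ t, q ((t:ℂ) * z₀) ∂μ) + z₀ * ∫ t, deriv q ((t:ℂ) * z₀) * (t:ℂ) ∂μ) z₀ :=
      (hasDerivAt_id z₀).mul key.2
    have hint1 : Integrable (fun t : ℝ => q ((t:ℂ) * z₀)) μ := by
      rw [hμ]
      exact ((hcont z₀ hz₀).integrableOn_Icc).mono_set Set.Ioc_subset_Icc_self
    have heq : 1 * (∫ t, q ((t:ℂ) * z₀) ∂μ) + z₀ * ∫ t, deriv q ((t:ℂ) * z₀) * (t:ℂ) ∂μ
        = q z₀ := by
      have e1 : z₀ * ∫ t, deriv q ((t:ℂ) * z₀) * (t:ℂ) ∂μ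
          = ∫ t, (t:ℂ) * (deriv q ((t:ℂ) * z₀) * z₀) ∂μ := by
        rw [← integral_const_mul]
        congr 1; funext t; ring
      rw [one_mul, e1, ← integral_add hint1]
      · have hFTC : ∫ t in (0:ℝ)..1,
            (q ((t:ℂ) * z₀) + (t:ℂ) * (deriv q ((t:ℂ) * z₀) * z₀)) = q z₀ := by
          have hderiv : ∀ t ∈ Set.uIcc (0:ℝ) 1,
              HasDerivAt (fun s : ℝ => ((s:ℂ)) * q ((s:ℂ) * z₀))
                (q ((t:ℂ) * z₀) + (t:ℂ) * (deriv q ((t:ℂ) * z₀) * z₀)) t := by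
            intro t ht
            rw [Set.uIcc_of_le zero_le_one] at ht
            have hmem' : (t:ℂ) * z₀ ∈ ball (0:ℂ) 1 :=
              hrsub (hmem t ht z₀ (mem_ball_self hδ))
            have hU : HasDerivAt (fun y : ℂ => y * q (y * z₀))
                (q ((t:ℂ) * z₀) + (t:ℂ) * (deriv q ((t:ℂ) * z₀) * z₀)) (t:ℂ) := by
              have h1 : HasDerivAt (fun y : ℂ => q (y * z₀)) (deriv q ((t:ℂ) * z₀) * z₀) (t:ℂ) := by
                have hd := (hq.differentiableAt (hopen.mem_nhds hmem')).hasDerivAt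
                have hmul : HasDerivAt (fun y : ℂ => y * z₀) z₀ (t:ℂ) := by
                  simpa using (hasDerivAt_id (t:ℂ)).mul_const z₀
                exact hd.comp (t:ℂ) hmul
              have := (hasDerivAt_id' (t:ℂ)).mul h1
              simp only [one_mul] at this
              exact this
            exact hU.comp_ofReal
          have hint : IntervalIntegrable
              (fun t : ℝ => q ((t:ℂ) * z₀) + (t:ℂ) * (deriv q ((t:ℂ) * z₀) * z₀))
              volume 0 1 := by
            apply ContinuousOn.intervalIntegrable
            rw [Set.uIcc_of_le zero_le_one]
            apply (hcont z₀ hz₀).add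
            have : ContinuousOn (fun t : ℝ => (deriv q ((t:ℂ) * z₀) * (t:ℂ)) * z₀)
                (Set.Icc 0 1) := hcont'.mul continuousOn_const
            apply this.congr
            intro t ht; ring
          have := intervalIntegral.integral_eq_sub_of_hasDerivAt hderiv hint
          rw [this]
          push_cast
          simp
        rw [hμ, ← intervalIntegral.integral_of_le zero_le_one] at *
        exact hFTC
      · have : IntegrableOn (fun t : ℝ => (deriv q ((t:ℂ) * z₀) * (t:ℂ)) * z₀)
            (Set.Ioc (0:ℝ) 1) volume :=
          ((hcont'.mul continuousOn_const).integrableOn_Icc).mono_set Set.Ioc_subset_Icc_self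
        rw [hμ]
        apply this.congr_fun _ measurableSet_Ioc
        intro t ht; ring
    rw [heq] at hD
    exact hD
  · -- hF_meas
    filter_upwards [Metric.ball_mem_nhds z₀ hδ] with x hx
    have hx1 : ‖x‖ < 1 := lt_of_le_of_lt (hballr x hx) hr1
    rw [hμ]
    exact ((hcont x hx1).mono Set.Ioc_subset_Icc_self).aestronglyMeasurable measurableSet_Ioc
  · -- hF_int
    rw [hμ]
    exact ((hcont z₀ hz₀).integrableOn_Icc).mono_set Set.Ioc_subset_Icc_self
  · -- hF'_meas
    rw [hμ]
    exact ((hcont'.mono Set.Ioc_subset_Icc_self).aestronglyMeasurable measurableSet_Ioc)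
  · -- h_bound
    rw [hμ]
    filter_upwards [ae_restrict_mem measurableSet_Ioc] with t ht x hx
    have ht' : t ∈ Set.Icc (0:ℝ) 1 := ⟨ht.1.le, ht.2⟩
    rw [norm_mul, Complex.norm_real, Real.norm_eq_abs]
    calc ‖deriv q ((t:ℂ) * x)‖ * |t| ≤ C * 1 := by
          apply mul_le_mul (hC _ (hmem t ht' x hx)) _ (abs_nonneg _) hC0
          rw [abs_le]; exact ⟨by linarith [ht'.1], ht'.2⟩
      _ = C := mul_one C
  · -- bound integrable
    rw [hμ]
    exact integrableOn_const measure_Ioc_lt_top.ne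
  · -- h_diff
    rw [hμ]
    filter_upwards [ae_restrict_mem measurableSet_Ioc] with t ht x hx
    have ht' : t ∈ Set.Icc (0:ℝ) 1 := ⟨ht.1.le, ht.2⟩
    have hmem' : (t:ℂ) * x ∈ ball (0:ℂ) 1 := hrsub (hmem t ht' x hx)
    have hd := (hq.differentiableAt (hopen.mem_nhds hmem')).hasDerivAt
    have hmul : HasDerivAt (fun y : ℂ => (t:ℂ) * y) (t:ℂ) x := by
      simpa using (hasDerivAt_id x).const_mul (t:ℂ)
    have h2 := hd.comp x hmul
    have h3 : HasDerivAt (fun y : ℂ => q ((t:ℂ) * y)) (deriv q ((t:ℂ) * x) * (t:ℂ)) x := by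
      exact h2
    exact h3

lemma exists_log_ball {g : ℂ → ℂ} (hg : DifferentiableOn ℂ g (ball (0:ℂ) 1))
    (hne : ∀ z ∈ ball (0:ℂ) 1, g z ≠ 0) :
    ∃ h : ℂ → ℂ, DifferentiableOn ℂ h (ball (0:ℂ) 1) ∧
      ∀ z ∈ ball (0:ℂ) 1, Complex.exp (h z) = g z := by
  have hopen : IsOpen (ball (0:ℂ) 1) := isOpen_ball
  have hg' : AnalyticOnNhd ℂ (deriv g) (ball (0:ℂ) 1) := (hg.analyticOnNhd hopen).deriv
  have hq : DifferentiableOn ℂ (fun z => deriv g z / g z) (ball (0:ℂ) 1) :=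
    (hg'.differentiableOn).div hg hne
  obtain ⟨h₀, hh₀⟩ := primitive_ball hq
  -- φ = g * exp(-h₀) is constant on the ball
  set φ : ℂ → ℂ := fun z => g z * Complex.exp (-h₀ z) with hφdef
  have hφd : ∀ z ∈ ball (0:ℂ) 1, HasDerivAt φ 0 z := by
    intro z hz
    have hgz : HasDerivAt g (deriv g z) z :=
      (hg.differentiableAt (hopen.mem_nhds hz)).hasDerivAt
    have hh : HasDerivAt (fun w => Complex.exp (-h₀ w))
        (-(deriv g z / g z) * Complex.exp (-h₀ z)) z := by
      have h1 : HasDerivAt (fun w => -h₀ w) (-(deriv g z / g z)) z := (hh₀ z hz).neg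
      simpa [mul_comm] using h1.cexp
    have := hgz.mul hh
    have heq : deriv g z * Complex.exp (-h₀ z) +
        g z * (-(deriv g z / g z) * Complex.exp (-h₀ z)) = 0 := by
      field_simp [hne z hz]
      ring
    rw [heq] at this
    exact this
  have hconst : ∀ z ∈ ball (0:ℂ) 1, φ z = φ 0 := by
    intro z hz
    apply (convex_ball (0:ℂ) 1).is_const_of_fderivWithin_eq_zero
      (fun w hw => ((hφd w hw).differentiableAt).differentiableWithinAt)
      _ hz (mem_ball_self one_pos)
    intro w hw
    have : fderiv ℂ φ w = 0 := by
      have := (hφd w hw).hasFDerivAt.fderiv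
      rw [this]
      ext v
      simp
    rw [fderivWithin_eq_fderiv (hopen.uniqueDiffOn w hw) (hφd w hw).differentiableAt]
    exact this
  have hφ0 : φ 0 ≠ 0 := by
    apply mul_ne_zero (hne 0 (mem_ball_self one_pos)) (Complex.exp_ne_zero _)
  refine ⟨fun z => h₀ z + Complex.log (φ 0), ?_, ?_⟩
  · intro z hz
    exact (((hh₀ z hz).differentiableAt).add_const _).differentiableWithinAt
  · intro z hz
    rw [Complex.exp_add, Complex.exp_log hφ0]
    have := hconst z hz
    rw [hφdef] at this
    simp only at this
    have h2 : g z = φ 0 * Complex.exp (h₀ z) := by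
      rw [hφdef]
      simp only
      rw [← this, mul_assoc, ← Complex.exp_add]
      simp
    rw [h2]; ring

set_option maxHeartbeats 2000000 in
/-- A holomorphic function bounded below in modulus on a sector of opening `β - α`
grows at most like `exp (A |z|^κ)`, `κ = π/(β-α)`, in every smaller subsector. -/
theorem stmt_11 (α β : ℝ) (hab : α < β) (h2π : β - α ≤ 2 * π)
    (f : ℂ → ℂ) (hf : DifferentiableOn ℂ f (sector α β))
    (M : ℝ) (hM : 0 < M) (hlb : ∀ z ∈ sector α β, M ≤ ‖f z‖) :
    ∀ ε : ℝ, 0 < ε → ∃ A B : ℝ, 0 < A ∧ 0 < B ∧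
      ∀ z ∈ sector (α + ε) (β - ε), 1 ≤ ‖z‖ →
        ‖f z‖ ≤ B * Real.exp (A * ‖z‖ ^ (π / (β - α))) := by
  intro ε hε
  have hβα : 0 < β - α := by linarith
  set κ : ℝ := π / (β - α) with hκdef
  have hκ : 0 < κ := div_pos Real.pi_pos hβα
  have hκβα : κ * (β - α) = π := by rw [hκdef, div_mul_cancel₀ _ hβα.ne']
  set ε' : ℝ := min ε ((β - α)/4) with hε'def
  have hε' : 0 < ε' := lt_min hε (by positivity)
  have hε'le : ε' ≤ ε := min_le_left _ _
  have hκε'4 : κ * ε' ≤ π/4 := by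
    have h1 : ε' ≤ (β - α)/4 := min_le_right _ _
    nlinarith
  have hκε'pos : 0 < κ * ε' := by positivity
  set s : ℝ := Real.sin (κ * ε') with hsdef
  have hs : 0 < s := Real.sin_pos_of_pos_of_lt_pi hκε'pos (by nlinarith [Real.pi_pos])
  have hsin_ge : ∀ φ : ℝ, κ*ε' ≤ φ → φ ≤ π - κ*ε' → s ≤ Real.sin φ := by
    intro φ h1 h2
    have hπ : 0 < π := Real.pi_pos
    rcases le_or_gt φ (π/2) with hc | hc
    · exact Real.strictMonoOn_sin.monotoneOn (Set.mem_Icc.mpr ⟨by linarith, by linarith⟩)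
        (Set.mem_Icc.mpr ⟨by linarith, hc⟩) h1
    · rw [← Real.sin_pi_sub]
      exact Real.strictMonoOn_sin.monotoneOn (Set.mem_Icc.mpr ⟨by linarith, by linarith⟩)
        (Set.mem_Icc.mpr ⟨by linarith, by linarith⟩) (by linarith)
  -- Conformal map from the unit disk onto the sector
  set S : ℂ → ℂ := fun ζ =>
    Complex.exp ((α:ℂ) * Complex.I + (κ:ℂ)⁻¹ * Complex.log (Complex.I * (1 + ζ) / (1 - ζ)))
    with hSdef
  set w : ℂ → ℂ := fun ζ => Complex.I * (1 + ζ) / (1 - ζ) with hwdef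
  have hζne1 : ∀ ζ ∈ ball (0:ℂ) 1, (1 : ℂ) - ζ ≠ 0 := by
    intro ζ hζ
    rw [mem_ball_zero_iff] at hζ
    intro H
    have : ζ = 1 := by linear_combination -H
    rw [this] at hζ; simp at hζ
  have himw : ∀ ζ ∈ ball (0:ℂ) 1, 0 < (w ζ).im := by
    intro ζ hζ
    have h1 : Complex.normSq (1 - ζ) > 0 := Complex.normSq_pos.mpr (hζne1 ζ hζ)
    have h2 : Complex.normSq ζ < 1 := by
      rw [mem_ball_zero_iff] at hζ
      have : ‖ζ‖ < 1 := hζ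
      nlinarith [Complex.sq_norm ζ, norm_nonneg ζ]
    have : (w ζ).im = (1 - Complex.normSq ζ) / Complex.normSq (1 - ζ) := by
      rw [hwdef]
      simp only [Complex.div_im, Complex.mul_im, Complex.mul_re, Complex.I_re, Complex.I_im,
        Complex.add_re, Complex.add_im, Complex.one_re, Complex.one_im, Complex.sub_re,
        Complex.sub_im, Complex.normSq_apply]
      field_simp
      ring_nf
    rw [this]
    exact div_pos (by linarith) h1
  have hargw : ∀ ζ ∈ ball (0:ℂ) 1, 0 < (w ζ).arg ∧ (w ζ).arg < π := by
    intro ζ hζ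
    have him := himw ζ hζ
    constructor
    · rcases lt_or_eq_of_le (Complex.arg_nonneg_iff.mpr him.le) with h | h
      · exact h
      · exfalso
        have := Complex.arg_eq_zero_iff.mp h.symm
        exact (ne_of_gt him) this.2
    · rcases lt_or_eq_of_le (Complex.arg_le_pi (w ζ)) with h | h
      · exact h
      · exfalso
        have := Complex.arg_eq_pi_iff.mp h
        exact (ne_of_gt him) this.2
  have hSmem : ∀ ζ ∈ ball (0:ℂ) 1, S ζ ∈ sector α β := by
    intro ζ hζ
    set c : ℂ := (α:ℂ) * Complex.I + (κ:ℂ)⁻¹ * Complex.log (w ζ) with hcdef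
    have hS : S ζ = Complex.exp c := by rw [hSdef, hcdef, hwdef]
    have hcim : c.im = α + κ⁻¹ * (w ζ).arg := by
      rw [hcdef]
      simp [Complex.add_im, Complex.mul_im, Complex.log_im, ← Complex.ofReal_inv]
    have hcre : c.re = κ⁻¹ * Real.log (‖w ζ‖) := by
      rw [hcdef]
      simp [Complex.add_re, Complex.mul_re, Complex.log_re, ← Complex.ofReal_inv]
    refine ⟨Real.exp c.re, c.im, Real.exp_pos _, ?_, ?_, ?_⟩
    · rw [hcim]
      have := (hargw ζ hζ).1
      have : 0 < κ⁻¹ * (w ζ).arg := by positivity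
      linarith
    · rw [hcim]
      have h1 := (hargw ζ hζ).2
      have h2 : κ⁻¹ * (w ζ).arg < κ⁻¹ * π := by
        apply mul_lt_mul_of_pos_left h1 (by positivity)
      have h3 : κ⁻¹ * π = β - α := by
        rw [hκdef]; field_simp
      linarith
    · rw [hS]
      have : Complex.exp c = ↑(Real.exp c.re) * Complex.exp (↑c.im * Complex.I) := by
        conv_lhs => rw [← Complex.re_add_im c]
        rw [Complex.exp_add, ← Complex.ofReal_exp]
      exact this
  have hSdiff : ∀ ζ ∈ ball (0:ℂ) 1, DifferentiableAt ℂ S ζ := by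
    intro ζ hζ
    rw [hSdef]
    apply DifferentiableAt.cexp
    apply DifferentiableAt.const_add
    apply DifferentiableAt.const_mul
    have hmob : DifferentiableAt ℂ (fun ζ : ℂ => Complex.I * (1 + ζ) / (1 - ζ)) ζ := by
      apply DifferentiableAt.div
      · fun_prop
      · fun_prop
      · exact hζne1 ζ hζ
    have hslit : Complex.I * (1 + ζ) / (1 - ζ) ∈ Complex.slitPlane := by
      right
      exact ne_of_gt (himw ζ hζ)
    exact (Complex.differentiableAt_log hslit).comp ζ hmob
  -- g = f ∘ S on the disk
  have hgd : DifferentiableOn ℂ (f ∘ S) (ball (0:ℂ) 1) := by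
    intro ζ hζ
    exact (hf _ (hSmem ζ hζ)).comp ζ (hSdiff ζ hζ).differentiableWithinAt
      (fun x hx => hSmem x hx)
  have hgne : ∀ ζ ∈ ball (0:ℂ) 1, (f ∘ S) ζ ≠ 0 := by
    intro ζ hζ
    have := hlb _ (hSmem ζ hζ)
    intro H
    rw [Function.comp_apply] at H
    rw [H] at this
    simp at this
    linarith
  obtain ⟨h, hhd, hhg⟩ := exists_log_ball hgd hgne
  have hre : ∀ ζ ∈ ball (0:ℂ) 1, Real.log M ≤ (h ζ).re := by
    intro ζ hζ
    have h1 : M ≤ ‖(f ∘ S) ζ‖ := hlb _ (hSmem ζ hζ)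
    rw [← hhg ζ hζ, Complex.norm_exp] at h1
    have := Real.log_le_log hM h1
    rwa [Real.log_exp] at this
  -- ψ with real part ≥ 1
  set ψ : ℂ → ℂ := fun ζ => h ζ + ((1 - Real.log M : ℝ) : ℂ) with hψdef
  have hψre : ∀ ζ ∈ ball (0:ℂ) 1, 1 ≤ (ψ ζ).re := by
    intro ζ hζ
    rw [hψdef]
    simp only [Complex.add_re, Complex.ofReal_re]
    have := hre ζ hζ
    linarith
  have hψd : DifferentiableOn ℂ ψ (ball (0:ℂ) 1) := by
    rw [hψdef]
    exact hhd.add_const _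
  have h0ball : (0:ℂ) ∈ ball (0:ℂ) 1 := mem_ball_self one_pos
  set p : ℂ := ψ 0 with hpdef
  have hp : 1 ≤ p.re := hψre 0 h0ball
  have hpa : 1 ≤ ‖p‖ := le_trans hp (Complex.re_le_norm p)
  -- Möbius transform into the disk
  set G : ℂ → ℂ := fun ζ => (ψ ζ - p) / (ψ ζ + (starRingEnd ℂ) p) with hGdef
  have hden : ∀ ζ ∈ ball (0:ℂ) 1, 0 < (ψ ζ + (starRingEnd ℂ) p).re := by
    intro ζ hζ
    rw [Complex.add_re, Complex.conj_re]
    have := hψre ζ hζ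
    linarith
  have hdenne : ∀ ζ ∈ ball (0:ℂ) 1, ψ ζ + (starRingEnd ℂ) p ≠ 0 := by
    intro ζ hζ H
    have := hden ζ hζ
    rw [H] at this
    simp at this
  have hGd : DifferentiableOn ℂ G (ball (0:ℂ) 1) := by
    rw [hGdef]
    exact (hψd.sub_const p).div (hψd.add_const _) hdenne
  have hG0 : G 0 = 0 := by rw [hGdef]; simp [← hpdef]
  have habslt : ∀ ζ ∈ ball (0:ℂ) 1, ‖G ζ‖ < 1 := by
    intro ζ hζ
    have key : Complex.normSq (ψ ζ - p) < Complex.normSq (ψ ζ + (starRingEnd ℂ) p) := by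
      have h1 := hψre ζ hζ
      simp only [Complex.normSq_apply, Complex.sub_re, Complex.sub_im, Complex.add_re,
        Complex.add_im, Complex.conj_re, Complex.conj_im]
      nlinarith
    rw [hGdef]
    simp only [norm_div]
    rw [div_lt_one (norm_pos_iff.mpr (hdenne ζ hζ))]
    rw [Complex.norm_def, Complex.norm_def]
    exact Real.sqrt_lt_sqrt (Complex.normSq_nonneg _) key
  have hGmaps : MapsTo G (ball (0:ℂ) 1) (ball (G 0) 1) := by
    intro ζ hζ
    rw [hG0, mem_ball_zero_iff]
    exact habslt ζ hζ
  have hSchwarz : ∀ ζ ∈ ball (0:ℂ) 1, ‖G ζ‖ ≤ ‖ζ‖ := by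
    intro ζ hζ
    have := Complex.dist_le_div_mul_dist_of_mapsTo_ball hGd (hGmaps.mono_right ball_subset_closedBall) hζ
    rw [hG0] at this
    simpa [dist_zero_right] using this
  have hψbound : ∀ ζ ∈ ball (0:ℂ) 1,
      ‖ψ ζ‖ * (1 - ‖ζ‖) ≤ 2 * ‖p‖ := by
    intro ζ hζ
    have htd : G ζ * (ψ ζ + (starRingEnd ℂ) p) = ψ ζ - p := by
      rw [hGdef]
      exact div_mul_cancel₀ _ (hdenne ζ hζ)
    have hiden : ψ ζ * (1 - G ζ) = p + G ζ * (starRingEnd ℂ) p := by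
      linear_combination -htd
    have habst : ‖G ζ‖ ≤ ‖ζ‖ := hSchwarz ζ hζ
    have habsζ : ‖ζ‖ < 1 := mem_ball_zero_iff.mp hζ
    have h1 : ‖ψ ζ‖ * ‖1 - G ζ‖ ≤ 2 * ‖p‖ := by
      rw [← norm_mul, hiden]
      calc ‖p + G ζ * (starRingEnd ℂ) p‖
          ≤ ‖p‖ + ‖G ζ * (starRingEnd ℂ) p‖ := norm_add_le _ _
        _ = ‖p‖ + ‖G ζ‖ * ‖p‖ := by
            rw [norm_mul, Complex.norm_conj]
        _ ≤ ‖p‖ + 1 * ‖p‖ := by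
            have : ‖G ζ‖ ≤ 1 := le_of_lt (habslt ζ hζ)
            nlinarith [norm_nonneg p]
        _ = 2 * ‖p‖ := by ring
    have h2 : 1 - ‖ζ‖ ≤ ‖1 - G ζ‖ := by
      have h2' := norm_sub_norm_le (1:ℂ) (G ζ)
      simp only [norm_one] at h2'
      linarith
    calc ‖ψ ζ‖ * (1 - ‖ζ‖)
        ≤ ‖ψ ζ‖ * ‖1 - G ζ‖ :=
          mul_le_mul_of_nonneg_left h2 (norm_nonneg _)
      _ ≤ 2 * ‖p‖ := h1
  -- Final construction of constants and the estimate
  refine ⟨4 * ‖p‖ / s, Real.exp (Real.log M - 1), by positivity, Real.exp_pos _, ?_⟩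
  intro z hz hz1
  obtain ⟨r, θ, hr, hθ1, hθ2, hzeq⟩ := hz
  have habsz : ‖z‖ = r := by
    rw [hzeq, norm_mul, Complex.norm_real, Real.norm_eq_abs, Complex.norm_exp_ofReal_mul_I, mul_one, abs_of_pos hr]
  have hr1 : 1 ≤ r := by rwa [habsz] at hz1
  set φ : ℝ := κ * (θ - α) with hφdef
  have hφlo : κ * ε' ≤ φ := by
    rw [hφdef]
    apply mul_le_mul_of_nonneg_left _ hκ.le
    linarith
  have hφhi : φ ≤ π - κ * ε' := by
    rw [hφdef]
    nlinarith
  have hφpos : 0 < φ := lt_of_lt_of_le hκε'pos hφlo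
  have hφπ : φ < π := by nlinarith
  set rκ : ℝ := r ^ κ with hrκdef
  have hrκpos : 0 < rκ := Real.rpow_pos_of_pos (by linarith) κ
  have hrκ1 : 1 ≤ rκ := Real.one_le_rpow hr1 hκ.le
  set W : ℂ := (rκ : ℂ) * Complex.exp ((φ:ℂ) * Complex.I) with hWdef
  have hWim : W.im = rκ * Real.sin φ := by
    rw [hWdef, Complex.exp_mul_I]
    simp [Complex.mul_im, Complex.add_re, Complex.add_im, Complex.mul_re,
      Complex.sin_ofReal_re, Complex.cos_ofReal_re]
  have hWabs : ‖W‖ = rκ := by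
    rw [hWdef, norm_mul, Complex.norm_real, Real.norm_eq_abs, Complex.norm_exp_ofReal_mul_I, mul_one,
      abs_of_pos hrκpos]
  have hsinφ : s ≤ Real.sin φ := hsin_ge φ hφlo hφhi
  have hsinφpos : 0 < Real.sin φ := lt_of_lt_of_le hs hsinφ
  have hWimpos : 0 < W.im := by rw [hWim]; positivity
  have hWI : W + Complex.I ≠ 0 := by
    intro H
    have := congrArg Complex.im H
    simp [Complex.add_im] at this
    nlinarith
  set ζ : ℂ := (W - Complex.I) / (W + Complex.I) with hζdef
  have hnormlt : Complex.normSq (W - Complex.I) < Complex.normSq (W + Complex.I) := by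
    simp only [Complex.normSq_apply, Complex.sub_re, Complex.sub_im, Complex.add_re,
      Complex.add_im, Complex.I_re, Complex.I_im]
    nlinarith
  have hζabs : ‖ζ‖ < 1 := by
    rw [hζdef, norm_div]
    rw [div_lt_one (norm_pos_iff.mpr hWI)]
    rw [Complex.norm_def, Complex.norm_def]
    exact Real.sqrt_lt_sqrt (Complex.normSq_nonneg _) hnormlt
  have hζball : ζ ∈ ball (0:ℂ) 1 := by rw [mem_ball_zero_iff]; exact hζabs
  have h1mζ : (1:ℂ) - ζ ≠ 0 := hζne1 ζ hζball
  have hmob : Complex.I * (1 + ζ) / (1 - ζ) = W := by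
    have e1 : (1:ℂ) + ζ = 2*W/(W + Complex.I) := by
      rw [hζdef]; field_simp; ring
    have e2 : (1:ℂ) - ζ = 2*Complex.I/(W + Complex.I) := by
      rw [hζdef]; field_simp; ring
    rw [e1, e2]
    field_simp
  have hargW : W.arg = φ := by
    have hWeq : W = (rκ:ℂ) * (Complex.cos (φ:ℂ) + Complex.sin (φ:ℂ) * Complex.I) := by
      rw [hWdef, Complex.exp_mul_I]
    rw [hWeq]
    exact Complex.arg_mul_cos_add_sin_mul_I hrκpos
      (Set.mem_Ioc.mpr ⟨by nlinarith [Real.pi_pos], hφπ.le⟩)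
  have hlogW : Complex.log W = ↑(Real.log rκ) + ↑φ * Complex.I := by
    apply Complex.ext
    · simp [Complex.log_re, hWabs]
    · simp [Complex.log_im, hargW]
  have hSz : S ζ = z := by
    rw [hSdef]
    simp only
    have harg2 : (α:ℂ)*Complex.I + (κ:ℂ)⁻¹ * Complex.log (Complex.I * (1+ζ)/(1-ζ))
        = ↑(Real.log r) + ↑θ * Complex.I := by
      rw [hmob, hlogW]
      rw [hrκdef, Real.log_rpow (by linarith : (0:ℝ) < r)]
      have hκC : (κ:ℂ) ≠ 0 := by exact_mod_cast ne_of_gt hκ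
      have hφeq : (φ:ℂ) = (κ:ℂ) * ((θ:ℂ) - (α:ℂ)) := by
        rw [hφdef]; push_cast; ring
      rw [hφeq]
      field_simp
      push_cast
      ring
    rw [harg2, Complex.exp_add, ← Complex.ofReal_exp, Real.exp_log (by linarith : (0:ℝ) < r),
      hzeq]
  -- the quantitative estimates
  have hψζ := hψbound ζ hζball
  set n2 : ℝ := Complex.normSq (W + Complex.I) with hn2def
  have hn2pos : 0 < n2 := Complex.normSq_pos.mpr hWI
  have hgap : 2 * W.im / n2 ≤ 1 - ‖ζ‖ := by
    have hx := hζabs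
    have hx0 := norm_nonneg ζ
    have e : (‖ζ‖)^2 * n2 = Complex.normSq (W - Complex.I) := by
      rw [hζdef, norm_div, div_pow, Complex.sq_norm, Complex.sq_norm, hn2def,
        div_mul_cancel₀ _ (ne_of_gt hn2pos)]
    have hdiff : n2 - Complex.normSq (W - Complex.I) = 4 * W.im := by
      rw [hn2def]
      simp only [Complex.normSq_apply, Complex.add_re, Complex.add_im, Complex.sub_re,
        Complex.sub_im, Complex.I_re, Complex.I_im]
      ring
    rw [div_le_iff₀ hn2pos]
    nlinarith
  have habsψ : ‖ψ ζ‖ ≤ (4 * ‖p‖ / s) * rκ := by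
    have step1 : ‖ψ ζ‖ * (2 * W.im / n2) ≤ 2 * ‖p‖ :=
      le_trans (mul_le_mul_of_nonneg_left hgap (norm_nonneg _)) hψζ
    have step2 : ‖ψ ζ‖ ≤ (2 * ‖p‖) * n2 / (2 * W.im) := by
      rw [le_div_iff₀ (by positivity : (0:ℝ) < 2 * W.im)]
      calc ‖ψ ζ‖ * (2 * W.im)
          = (‖ψ ζ‖ * (2 * W.im / n2)) * n2 := by field_simp
        _ ≤ (2 * ‖p‖) * n2 := mul_le_mul_of_nonneg_right step1 hn2pos.le
    have hn2le : n2 ≤ 4 * rκ^2 := by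
      have habsWI : ‖W + Complex.I‖ ≤ rκ + 1 := by
        calc ‖W + Complex.I‖ ≤ ‖W‖ + ‖Complex.I‖ :=
              norm_add_le _ _
          _ = rκ + 1 := by rw [hWabs, Complex.norm_I]
      have hsq : n2 = (‖W + Complex.I‖)^2 := (Complex.sq_norm _).symm
      nlinarith [norm_nonneg (W + Complex.I)]
    have hWimge : rκ * s ≤ W.im := by
      rw [hWim]
      nlinarith
    calc ‖ψ ζ‖ ≤ (2 * ‖p‖) * n2 / (2 * W.im) := step2
      _ ≤ (2 * ‖p‖) * (4 * rκ^2) / (2 * (rκ * s)) := by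
          apply div_le_div₀ (by positivity) _ (by positivity) (by linarith)
          nlinarith [norm_nonneg p]
      _ = (4 * ‖p‖ / s) * rκ := by
          field_simp
  have hhre : (h ζ).re ≤ (4 * ‖p‖ / s) * rκ + Real.log M - 1 := by
    have h1 : (ψ ζ).re ≤ ‖ψ ζ‖ := Complex.re_le_norm _
    have h2 : (ψ ζ).re = (h ζ).re + (1 - Real.log M) := by
      rw [hψdef]; simp
    linarith
  have hfz : ‖f z‖ = Real.exp ((h ζ).re) := by
    rw [← hSz]
    have hg := hhg ζ hζball
    rw [Function.comp_apply] at hg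
    rw [← hg, Complex.norm_exp]
  rw [hfz, ← Real.exp_add]
  apply Real.exp_le_exp.mpr
  rw [habsz]
  linarith
end
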